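/- arXiv:2304.03506 — 9 statements merged into one kernel-verified Lean document; each statement's English description precedes it below -/
import Mathlib

section
/- Let Ū : ℝ → ℝ be the inverse of u ↦ -u - u³, i.e. y = -Ū(y) - Ū(y)³ for all y. Then for every y ∈ ℝ: |Ū(y)| ≤ (1 + y²)^{1/6} and |Ū'(y)| ≤ (1 + y²)^{-1/3}. -/
open Set

/-- Bounds for the self-similar Burgers profile `Ū` (the inverse of `u ↦ -u - u³`):
`|Ū(y)| ≤ (1 + y²)^{1/6}` and `|Ū'(y)| ≤ (1 + y²)^{-1/3}`. -/
theorem selfsimilar_burgers_profile_bounds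
    (Ubar : ℝ → ℝ) (hUbar : ∀ y : ℝ, y = -Ubar y - Ubar y ^ 3) :
    ∀ y : ℝ, |Ubar y| ≤ (1 + y ^ 2) ^ ((1 : ℝ) / 6) ∧
      |deriv Ubar y| ≤ (1 + y ^ 2) ^ (-(1 : ℝ) / 3) := by
  -- the increasing bijection h(u) = u + u³
  have hmono : StrictMono (fun u : ℝ => u + u ^ 3) :=
    strictMono_id.add ((by decide : Odd 3).strictMono_pow)
  have hsurj : Function.Surjective (fun u : ℝ => u + u ^ 3) := by
    intro y
    refine ⟨-Ubar y, ?_⟩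
    have := hUbar y
    simp only
    ring_nf
    linarith
  set e := StrictMono.orderIsoOfSurjective _ hmono hsurj with he
  have hUeq : ∀ y : ℝ, Ubar y = -(e.symm y) := by
    intro y
    have h1 : (fun u : ℝ => u + u ^ 3) (e.symm y) = y := by
      have h1a := e.apply_symm_apply y
      have h1b := congrFun (StrictMono.coe_orderIsoOfSurjective _ hmono hsurj) (e.symm y)
      simp only at h1b ⊢
      rw [← h1b]
      exact h1a
    have h2 : (fun u : ℝ => u + u ^ 3) (-Ubar y) = y := by
      have := hUbar y
      simp only
      ring_nf
      linarith
    have := hmono.injective (h2.trans h1.symm)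
    linarith
  have hcont : Continuous Ubar := by
    have : Continuous (fun y : ℝ => -(e.symm y)) :=
      (OrderIso.continuous e.symm).neg
    have hfun : Ubar = fun y : ℝ => -(e.symm y) := funext hUeq
    rw [hfun]; exact this
  intro y
  set u := Ubar y with hu
  have hy : y = -u - u ^ 3 := hUbar y
  have hy2 : y ^ 2 = u ^ 2 * (1 + u ^ 2) ^ 2 := by rw [hy]; ring
  have hpos : (0:ℝ) < 1 + y ^ 2 := by positivity
  constructor
  · -- |u|^6 ≤ 1 + y²
    have h6 : |u| ^ (6:ℕ) ≤ 1 + y ^ 2 := by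
      have : |u| ^ (6:ℕ) = u ^ 6 := by
        rw [← abs_pow]; exact abs_of_nonneg (by positivity)
      rw [this, hy2]; nlinarith [sq_nonneg u, sq_nonneg (u^2), sq_nonneg (u^3)]
    have := Real.rpow_le_rpow (by positivity) h6 (by norm_num : (0:ℝ) ≤ 1/6)
    calc |u| = (|u| ^ (6:ℕ)) ^ ((1:ℝ)/6) := by
              rw [← Real.rpow_natCast |u| 6, ← Real.rpow_mul (abs_nonneg u)]
              norm_num
      _ ≤ (1 + y ^ 2) ^ ((1:ℝ)/6) := this
  · -- derivative
    have hf : HasDerivAt (fun u : ℝ => -u - u ^ 3) (-(1 + 3 * u ^ 2)) u := by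
      have h1 : HasDerivAt (fun u : ℝ => -u - u ^ 3) (-1 - ((3:ℕ):ℝ) * u ^ (3 - 1)) u :=
        ((hasDerivAt_id u).neg.sub (hasDerivAt_pow 3 u))
      convert h1 using 1
      push_cast; ring
    have hne : (-(1 + 3 * u ^ 2)) ≠ 0 := by nlinarith [sq_nonneg u]
    have hfg : ∀ᶠ z in nhds y, (fun u : ℝ => -u - u ^ 3) (Ubar z) = z :=
      Filter.Eventually.of_forall fun z => (hUbar z).symm
    have hder : HasDerivAt Ubar (-(1 + 3 * u ^ 2))⁻¹ y :=
      HasDerivAt.of_local_left_inverse hcont.continuousAt hf hne hfg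
    rw [hder.deriv]
    have habs : |(-(1 + 3 * u ^ 2))⁻¹| = (1 + 3 * u ^ 2)⁻¹ := by
      rw [abs_inv, abs_neg, abs_of_pos (by positivity)]
    rw [habs]
    -- (1+y²)^{1/3} ≤ 1 + 3u²
    have hcube : 1 + y ^ 2 ≤ (1 + 3 * u ^ 2) ^ (3:ℕ) := by
      rw [hy2]; nlinarith [sq_nonneg u, sq_nonneg (u^2), sq_nonneg (u^3)]
    have h13 : (1 + y ^ 2) ^ ((1:ℝ)/3) ≤ 1 + 3 * u ^ 2 := by
      have := Real.rpow_le_rpow (le_of_lt hpos) hcube (by norm_num : (0:ℝ) ≤ 1/3)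
      calc (1 + y ^ 2) ^ ((1:ℝ)/3) ≤ ((1 + 3 * u ^ 2) ^ (3:ℕ)) ^ ((1:ℝ)/3) := this
        _ = 1 + 3 * u ^ 2 := by
            rw [← Real.rpow_natCast (1 + 3 * u ^ 2) 3,
              ← Real.rpow_mul (by positivity)]
            norm_num
    have hneg : (1 + y ^ 2) ^ (-(1:ℝ)/3) = ((1 + y ^ 2) ^ ((1:ℝ)/3))⁻¹ := by
      rw [← Real.rpow_neg (le_of_lt hpos)]
      norm_num
    rw [hneg]
    exact inv_anti₀ (by positivity) h13
end

section
/- For y = (y₁, y₂, y₃) ∈ ℝ³ set ⟨y̌⟩ = 1 + y₂² + y₃² and W̄(y) = ⟨y̌⟩^{1/2} Ū(⟨y̌⟩^{-3/2} y₁), where Ū is the inverse of u ↦ -u - u³. Then W̄ is C^∞ on ℝ³ and solves the 3D self-similar Burgers equation: -(1/2) W̄ + ((3/2) y₁ + W̄) ∂₁W̄ + (1/2) y₂ ∂₂W̄ + (1/2) y₃ ∂₃W̄ = 0 at every point of ℝ³. -/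
open Set

set_option maxHeartbeats 2000000

private noncomputable def burgersProj (i : Fin 3) : (Fin 3 → ℝ) →L[ℝ] ℝ :=
  ContinuousLinearMap.proj i

/-- `W̄(y) = ⟨y̌⟩^{1/2} Ū(⟨y̌⟩^{-3/2} y₁)`, with `⟨y̌⟩ = 1 + y₂² + y₃²` and `Ū` the
inverse of `u ↦ -u - u³`, is smooth on ℝ³ and solves the 3D self-similar Burgers
equation `-(1/2)W̄ + ((3/2)y₁ + W̄)∂₁W̄ + (1/2)y₂∂₂W̄ + (1/2)y₃∂₃W̄ = 0`. -/
theorem selfsimilar_burgers_profile_3d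
    (Ubar : ℝ → ℝ) (hUbar : ∀ z : ℝ, z = -Ubar z - Ubar z ^ 3)
    (Wbar : (Fin 3 → ℝ) → ℝ)
    (hWbar : ∀ y : Fin 3 → ℝ,
      Wbar y = (1 + y 1 ^ 2 + y 2 ^ 2) ^ ((1 : ℝ) / 2)
        * Ubar ((1 + y 1 ^ 2 + y 2 ^ 2) ^ (-(3 : ℝ) / 2) * y 0)) :
    ContDiff ℝ (⊤ : ℕ∞) Wbar ∧
    ∀ y : Fin 3 → ℝ,
      -(1 / 2) * Wbar y
        + ((3 / 2) * y 0 + Wbar y) * fderiv ℝ Wbar y (Pi.single 0 1)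
        + (1 / 2) * y 1 * fderiv ℝ Wbar y (Pi.single 1 1)
        + (1 / 2) * y 2 * fderiv ℝ Wbar y (Pi.single 2 1) = 0 := by
  -- Basic properties of `Ubar`
  have hg_mono : StrictMono (fun u : ℝ => u + u ^ 3) := by
    intro a b hab
    show a + a ^ 3 < b + b ^ 3
    nlinarith [sq_nonneg (a + b), sq_nonneg (a - b), sq_nonneg a, sq_nonneg b]
  have hgU : ∀ z : ℝ, Ubar z + Ubar z ^ 3 = -z := fun z => by
    have := hUbar z; linarith
  have hsurj : Function.Surjective (fun u : ℝ => u + u ^ 3) := fun z =>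
    ⟨Ubar (-z), by simpa using hgU (-z)⟩
  have hUcont : Continuous Ubar := by
    let e := StrictMono.orderIsoOfSurjective _ hg_mono hsurj
    have he : ∀ z : ℝ, Ubar z = e.symm (-z) := fun z => by
      apply hg_mono.injective
      have h2 : (fun u : ℝ => u + u ^ 3) (e.symm (-z)) = e (e.symm (-z)) := rfl
      rw [h2, e.apply_symm_apply]
      exact hgU z
    have : Ubar = fun z => e.symm (-z) := funext he
    rw [this]
    exact e.symm.continuous.comp continuous_neg
  have hUder : ∀ z : ℝ, HasDerivAt Ubar (-(1 + 3 * Ubar z ^ 2))⁻¹ z := by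
    intro z
    have hf : HasDerivAt (fun u : ℝ => -u - u ^ 3) (-(1 + 3 * Ubar z ^ 2)) (Ubar z) := by
      have h := ((hasDerivAt_id (Ubar z)).neg).sub (hasDerivAt_pow 3 (Ubar z))
      exact h.congr_deriv (by rw [show (3:ℕ) - 1 = 2 from rfl]; push_cast; ring)
    exact HasDerivAt.of_local_left_inverse hUcont.continuousAt hf
      (by nlinarith [sq_nonneg (Ubar z)])
      (Filter.Eventually.of_forall fun w => (hUbar w).symm)
  have hUsmooth : ContDiff ℝ (⊤ : ℕ∞) Ubar := by
    refine contDiff_infty.mpr ?_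
    intro n
    induction n with
    | zero => exact contDiff_zero.mpr hUcont
    | succ n ih =>
      rw [show ((n + 1 : ℕ) : WithTop ℕ∞) = (n : WithTop ℕ∞) + 1 by push_cast; ring]
      rw [contDiff_succ_iff_deriv]
      refine ⟨fun z => (hUder z).differentiableAt, by simp, ?_⟩
      have hderiv : deriv Ubar = fun z => (-(1 + 3 * Ubar z ^ 2))⁻¹ :=
        funext fun z => (hUder z).deriv
      rw [hderiv]
      exact ((contDiff_const.add (contDiff_const.mul (ih.pow 2))).neg).inv
        (fun z => by nlinarith [sq_nonneg (Ubar z)])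
  have hWfun : Wbar = fun y : Fin 3 → ℝ => (1 + y 1 ^ 2 + y 2 ^ 2) ^ ((1 : ℝ) / 2)
      * Ubar ((1 + y 1 ^ 2 + y 2 ^ 2) ^ (-(3 : ℝ) / 2) * y 0) := funext hWbar
  subst hWfun
  have hApos : ∀ y : Fin 3 → ℝ, (0:ℝ) < 1 + y 1 ^ 2 + y 2 ^ 2 := fun y => by positivity
  constructor
  · -- Smoothness
    have hAc : ContDiff ℝ (⊤ : ℕ∞) (fun y : Fin 3 → ℝ => 1 + y 1 ^ 2 + y 2 ^ 2) := by
      have h1 : ContDiff ℝ (⊤ : ℕ∞) (fun y : Fin 3 → ℝ => y 1) :=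
        (ContinuousLinearMap.proj 1 : (Fin 3 → ℝ) →L[ℝ] ℝ).contDiff
      have h2 : ContDiff ℝ (⊤ : ℕ∞) (fun y : Fin 3 → ℝ => y 2) :=
        (ContinuousLinearMap.proj 2 : (Fin 3 → ℝ) →L[ℝ] ℝ).contDiff
      exact (contDiff_const.add (h1.pow 2)).add (h2.pow 2)
    have h0 : ContDiff ℝ (⊤ : ℕ∞) (fun y : Fin 3 → ℝ => y 0) :=
      (ContinuousLinearMap.proj 0 : (Fin 3 → ℝ) →L[ℝ] ℝ).contDiff
    have hs : ContDiff ℝ (⊤ : ℕ∞)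
        (fun y : Fin 3 → ℝ => (1 + y 1 ^ 2 + y 2 ^ 2) ^ ((1:ℝ)/2)) :=
      hAc.rpow_const_of_ne (fun y => (hApos y).ne')
    have hA32 : ContDiff ℝ (⊤ : ℕ∞)
        (fun y : Fin 3 → ℝ => (1 + y 1 ^ 2 + y 2 ^ 2) ^ (-(3:ℝ)/2)) :=
      hAc.rpow_const_of_ne (fun y => (hApos y).ne')
    exact hs.mul (hUsmooth.comp (hA32.mul h0))
  · intro y
    have ha : (0:ℝ) < 1 + y 1 ^ 2 + y 2 ^ 2 := hApos y
    set a : ℝ := 1 + y 1 ^ 2 + y 2 ^ 2 with ha_def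
    have hsq : ∀ i : Fin 3,
        HasFDerivAt (fun y : Fin 3 → ℝ => y i ^ 2) ((2 * y i) • burgersProj i) y := by
      intro i
      have h1 : HasFDerivAt (fun y : Fin 3 → ℝ => y i) (burgersProj i) y :=
        (burgersProj i).hasFDerivAt
      have h : HasFDerivAt (fun y : Fin 3 → ℝ => y i * y i) _ y := h1.mul h1
      have he : (fun y : Fin 3 → ℝ => y i * y i) = fun y : Fin 3 → ℝ => y i ^ 2 := by
        ext z; ring
      rw [he] at h
      refine h.congr_fderiv ?_
      ext z
      simp [two_mul, add_mul, ContinuousLinearMap.add_apply]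
    have hA : HasFDerivAt (fun y : Fin 3 → ℝ => 1 + y 1 ^ 2 + y 2 ^ 2)
        ((2 * y 1) • burgersProj 1 + (2 * y 2) • burgersProj 2) y := by
      have := ((hasFDerivAt_const (1:ℝ) y).add (hsq 1)).add (hsq 2)
      refine this.congr_fderiv ?_
      simp
    set u := Ubar (a ^ (-(3:ℝ)/2) * y 0) with hu_def
    have hW : HasFDerivAt (fun y : Fin 3 → ℝ =>
        (1 + y 1 ^ 2 + y 2 ^ 2) ^ ((1:ℝ)/2) * Ubar ((1 + y 1 ^ 2 + y 2 ^ 2) ^ (-(3:ℝ)/2) * y 0))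
        ((a ^ ((1:ℝ)/2)) • ((-(1 + 3 * u ^ 2))⁻¹ •
            ((a ^ (-(3:ℝ)/2)) • burgersProj 0 + (y 0) • (((-(3:ℝ)/2) * a ^ (-(3:ℝ)/2 - 1)) •
              ((2 * y 1) • burgersProj 1 + (2 * y 2) • burgersProj 2))))
          + u • ((((1:ℝ)/2) * a ^ ((1:ℝ)/2 - 1)) •
              ((2 * y 1) • burgersProj 1 + (2 * y 2) • burgersProj 2))) y := by
      have hs : HasFDerivAt (fun y : Fin 3 → ℝ => (1 + y 1 ^ 2 + y 2 ^ 2) ^ ((1:ℝ)/2))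
          ((((1:ℝ)/2) * a ^ ((1:ℝ)/2 - 1)) •
            ((2 * y 1) • burgersProj 1 + (2 * y 2) • burgersProj 2)) y :=
        by have := ((Real.hasStrictDerivAt_rpow_const_of_ne ha.ne' ((1:ℝ)/2)).hasDerivAt).comp_hasFDerivAt y hA; exact this
      have hA32 : HasFDerivAt (fun y : Fin 3 → ℝ => (1 + y 1 ^ 2 + y 2 ^ 2) ^ (-(3:ℝ)/2))
          (((-(3:ℝ)/2) * a ^ (-(3:ℝ)/2 - 1)) •
            ((2 * y 1) • burgersProj 1 + (2 * y 2) • burgersProj 2)) y :=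
        by have := ((Real.hasStrictDerivAt_rpow_const_of_ne ha.ne' (-(3:ℝ)/2)).hasDerivAt).comp_hasFDerivAt y hA; exact this
      have hφ : HasFDerivAt (fun y : Fin 3 → ℝ => (1 + y 1 ^ 2 + y 2 ^ 2) ^ (-(3:ℝ)/2) * y 0)
          ((a ^ (-(3:ℝ)/2)) • burgersProj 0 + (y 0) • (((-(3:ℝ)/2) * a ^ (-(3:ℝ)/2 - 1)) •
            ((2 * y 1) • burgersProj 1 + (2 * y 2) • burgersProj 2))) y :=
        hA32.mul (burgersProj 0).hasFDerivAt
      exact hs.mul ((hUder _).comp_hasFDerivAt y hφ)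
    rw [hW.fderiv]
    simp only [ContinuousLinearMap.add_apply, ContinuousLinearMap.smul_apply, burgersProj,
      ContinuousLinearMap.proj_apply, Pi.single_apply, smul_eq_mul]
    norm_num
    have h20 : ((2:Fin 3) = 0) = False := by decide
    have h21 : ((2:Fin 3) = 1) = False := by decide
    have h02 : ((0:Fin 3) = 2) = False := by decide
    have h12 : ((1:Fin 3) = 2) = False := by decide
    simp only [h20, h21, h02, h12, if_false, add_zero, zero_add]
    set r : ℝ := a ^ ((1:ℝ)/2) with hr_def
    have hr : 0 < r := Real.rpow_pos_of_pos ha _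
    have hk : ∀ k : ℕ, a ^ ((k:ℝ)/2) = r ^ k := by
      intro k
      rw [show ((k:ℝ)/2) = (1/2) * k by ring, Real.rpow_mul ha.le, Real.rpow_natCast]
    have hknn : ∀ k : ℕ, a ^ (-((k:ℝ)/2)) = (r ^ k)⁻¹ := fun k => by
      rw [Real.rpow_neg ha.le, hk]
    have e2 : a ^ (-(3/2) : ℝ) = (r^3)⁻¹ := by simpa using hknn 3
    have e3 : a ^ (-(5/2) : ℝ) = (r^5)⁻¹ := by simpa using hknn 5
    have e4 : a ^ (-(1/2) : ℝ) = r⁻¹ := by simpa using hknn 1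
    have hr2 : r ^ 2 = a := by simpa using (hk 2).symm
    have hsum : y 2 ^ 2 = r ^ 2 - 1 - y 1 ^ 2 := by rw [hr2]; simp [ha_def]; ring
    have hy0 : y 0 = (-u - u ^ 3) * r ^ 3 := by
      have h := (hUbar (a ^ ((-3:ℝ) / 2) * y 0)).symm
      rw [← hu_def] at h
      rw [show ((-3:ℝ)/2) = (-(3/2) : ℝ) by norm_num, e2] at h
      field_simp at h
      linarith
    have h3u : (-(3 * u ^ 2) + -1 : ℝ) ≠ 0 := by nlinarith [sq_nonneg u]
    have hu2 : Ubar ((1 + y 1 ^ 2 + y 2 ^ 2) ^ (-(3 / 2) : ℝ) * y 0) = u := by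
      rw [hu_def, ha_def]
      norm_num
    rw [hu2, e2, e3, e4, hy0]
    field_simp
    ring_nf
    rw [hsum]
    ring_nf
    have h3u' : (-1 - u ^ 2 * 3 : ℝ) ≠ 0 := by nlinarith [sq_nonneg u]
    field_simp
    ring
end

section
/- Let W̄(y) = ⟨y̌⟩^{1/2} Ū(⟨y̌⟩^{-3/2} y₁) with ⟨y̌⟩ = 1 + y₂² + y₃² and Ū the inverse of u ↦ -u - u³, and let η(y) = 1 + y₁² + (y₂² + y₃²)³. Then there is a constant C > 0 such that for all y ∈ ℝ³ and μ, ν ∈ {2, 3}: |W̄(y)| ≤ C η(y)^{1/6}, |∂₁W̄(y)| ≤ C η(y)^{-1/3}, |∂_μW̄(y)| ≤ C, |∂₁²W̄(y)| ≤ C η(y)^{-1/2}, |∂₁∂_μW̄(y)| ≤ C η(y)^{-1/3}, and |∂_μ∂_νW̄(y)| ≤ C η(y)^{-1/6}. -/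
open Set

namespace SSB

/-! ### One-dimensional facts about the inverse profile -/

noncomputable def U1 (U : ℝ → ℝ) (z : ℝ) : ℝ := -(1 + 3 * U z ^ 2)⁻¹
noncomputable def U2 (U : ℝ → ℝ) (z : ℝ) : ℝ := -(6 * U z) * ((1 + 3 * U z ^ 2)⁻¹)^3
noncomputable def Gf (U : ℝ → ℝ) (t : ℝ) : ℝ := 2*((1:ℝ)/2)*U t - 3*t*U1 U t
noncomputable def G1f (U : ℝ → ℝ) (t : ℝ) : ℝ := -2*U1 U t - 3*t*U2 U t

variable {U : ℝ → ℝ}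

theorem w_pos (u : ℝ) : (0:ℝ) < 1 + 3 * u ^ 2 := by nlinarith [sq_nonneg u]

theorem cube_inj {a b : ℝ} (h : -a - a^3 = -b - b^3) : a = b := by
  have h2 : (a - b) * (1 + a^2 + a*b + b^2) = 0 := by linear_combination -h
  have h3 : 0 < 1 + a^2 + a*b + b^2 := by nlinarith [sq_nonneg (a+b), sq_nonneg a, sq_nonneg b]
  rcases mul_eq_zero.1 h2 with h4 | h4
  · linarith
  · linarith

theorem U_left_inv (hU : ∀ z : ℝ, z = -U z - U z ^ 3) (u : ℝ) : U (-u - u^3) = u := by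
  apply cube_inj
  rw [← hU (-u - u^3)]

theorem U_cont (hU : ∀ z : ℝ, z = -U z - U z ^ 3) : Continuous U := by
  have hmono : Monotone (fun z => U (-z)) := by
    intro z1 z2 hle
    have h1 : U (-z1) + (U (-z1))^3 = z1 := by have := hU (-z1); linarith
    have h2 : U (-z2) + (U (-z2))^3 = z2 := by have := hU (-z2); linarith
    by_contra hcon
    push_neg at hcon
    have hba : U (-z2) < U (-z1) := hcon
    nlinarith [sq_nonneg (U (-z1) + U (-z2)), sq_nonneg (U (-z1) - U (-z2)),
      sq_nonneg (U (-z1)), sq_nonneg (U (-z2))]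
  have hsurj : Function.Surjective (fun z => U (-z)) := by
    intro u
    exact ⟨-(-u - u^3), by simp only [neg_neg]; exact U_left_inv hU u⟩
  have hcv : Continuous (fun z => U (-z)) := hmono.continuous_of_surjective hsurj
  have : Continuous (fun z : ℝ => U (- (-z))) := hcv.comp continuous_neg
  simpa using this

theorem U_hasDerivAt (hU : ∀ z : ℝ, z = -U z - U z ^ 3) (z : ℝ) :
    HasDerivAt U (U1 U z) z := by
  have hf : HasDerivAt (fun u : ℝ => -u - u^3) (-(1 + 3 * U z ^ 2)) (U z) := by
    have h1 := ((hasDerivAt_id (U z)).neg).sub (hasDerivAt_pow 3 (U z))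
    refine h1.congr_deriv ?_
    norm_num
    ring
  have := HasDerivAt.of_local_left_inverse (U_cont hU).continuousAt hf
    (by nlinarith [sq_nonneg (U z)]) (Filter.Eventually.of_forall fun y => (hU y).symm)
  rwa [inv_neg, ← U1] at this

theorem U1_hasDerivAt (hd : ∀ z, HasDerivAt U (U1 U z) z) (z : ℝ) :
    HasDerivAt (U1 U) (U2 U z) z := by
  have hw : (1 + 3 * U z ^ 2) ≠ 0 := ne_of_gt (w_pos _)
  have h1 : HasDerivAt (fun t => 1 + 3 * U t ^ 2) (3 * (2 * U z ^ 1 * U1 U z)) z := by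
    have := (hasDerivAt_const z (1:ℝ)).add (((hd z).pow 2).const_mul 3)
    refine this.congr_deriv ?_
    norm_num
  have h2 := (h1.inv hw).neg
  refine h2.congr_deriv ?_
  simp only [U1, U2]
  field_simp
  ring

theorem Gf_hasDerivAt (hd : ∀ z, HasDerivAt U (U1 U z) z) (t : ℝ) :
    HasDerivAt (Gf U) (G1f U t) t := by
  have h1 := ((hd t).const_mul (2*((1:ℝ)/2))).sub
    (((hasDerivAt_id t).const_mul 3).mul (U1_hasDerivAt hd t))
  refine h1.congr_deriv ?_
  simp only [G1f, id_eq]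
  ring

/-! ### Pointwise algebraic identities using the cubic relation -/

theorem algG (u z : ℝ) (hz : z = -u - u^3) :
    2*((1:ℝ)/2)*u - 3*z*(-(1 + 3*u^2)⁻¹) = -(2*u) * (1 + 3*u^2)⁻¹ := by
  subst hz
  have hw : (1 + 3*u^2) ≠ 0 := ne_of_gt (w_pos u)
  field_simp
  ring

theorem algG1 (u z : ℝ) (hz : z = -u - u^3) :
    -2*(-(1 + 3*u^2)⁻¹) - 3*z*(-(6*u) * ((1 + 3*u^2)⁻¹)^3)
      = (2 - 6*u^2) * ((1 + 3*u^2)⁻¹)^3 := by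
  subst hz
  have hw : (1 + 3*u^2) ≠ 0 := ne_of_gt (w_pos u)
  field_simp
  ring

theorem algH (u z : ℝ) (hz : z = -u - u^3) :
    2*((1:ℝ)/2 - 1)*(-(2*u) * (1 + 3*u^2)⁻¹) - 3*z*((2 - 6*u^2) * ((1 + 3*u^2)⁻¹)^3)
      = 8*u * ((1 + 3*u^2)⁻¹)^3 := by
  subst hz
  have hw : (1 + 3*u^2) ≠ 0 := ne_of_gt (w_pos u)
  field_simp
  ring

theorem Gf_eq (hU : ∀ z : ℝ, z = -U z - U z ^ 3) (t : ℝ) :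
    Gf U t = -(2*U t) * (1 + 3*U t^2)⁻¹ := by
  simp only [Gf, U1]
  linear_combination algG (U t) t (hU t)

theorem G1f_eq (hU : ∀ z : ℝ, z = -U z - U z ^ 3) (t : ℝ) :
    G1f U t = (2 - 6*U t^2) * ((1 + 3*U t^2)⁻¹)^3 := by
  simp only [G1f, U1, U2]
  linear_combination algG1 (U t) t (hU t)

theorem Hf_eq (hU : ∀ z : ℝ, z = -U z - U z ^ 3) (t : ℝ) :
    2*((1:ℝ)/2 - 1)*Gf U t - 3*t*G1f U t = 8*U t * ((1 + 3*U t^2)⁻¹)^3 := by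
  rw [Gf_eq hU t, G1f_eq hU t]
  linear_combination algH (U t) t (hU t)


noncomputable def S (y : Fin 3 → ℝ) : ℝ := 1 + y 1 ^ 2 + y 2 ^ 2
noncomputable def Z (y : Fin 3 → ℝ) : ℝ := S y ^ (-(3:ℝ)/2) * y 0

theorem S_pos (y : Fin 3 → ℝ) : 0 < S y := by
  simp only [S]; nlinarith [sq_nonneg (y 1), sq_nonneg (y 2)]

theorem one_le_S (y : Fin 3 → ℝ) : 1 ≤ S y := by
  simp only [S]; nlinarith [sq_nonneg (y 1), sq_nonneg (y 2)]

/-! ### rpow helper lemmas -/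

theorem pow6_le {X B : ℝ} (hX : 0 ≤ X) (h : X ^ (6:ℕ) ≤ B) : X ≤ B ^ ((1:ℝ)/6) := by
  have h1 : X = (X ^ (6:ℕ)) ^ ((1:ℝ)/6) := by
    rw [← Real.rpow_natCast X 6, ← Real.rpow_mul hX]
    norm_num
  rw [h1]
  exact Real.rpow_le_rpow (by positivity) h (by norm_num)

theorem key_neg {T B : ℝ} (hT : 1 ≤ T) (hB : 1 ≤ B) (h : B ≤ T ^ (3:ℕ)) {β γ : ℝ}
    (hγ : 0 ≤ γ) (hβ : 3 * γ ≤ β) : T ^ (-β) ≤ B ^ (-γ) := by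
  have hT0 : (0:ℝ) < T := lt_of_lt_of_le one_pos hT
  have hB0 : (0:ℝ) < B := lt_of_lt_of_le one_pos hB
  have h1 : B ^ γ ≤ T ^ β := by
    have h2 : B ^ γ ≤ (T ^ (3:ℕ)) ^ γ := Real.rpow_le_rpow hB0.le h hγ
    have h3 : ((T ^ (3:ℕ) : ℝ)) ^ γ = T ^ ((3:ℝ)*γ) := by
      rw [← Real.rpow_natCast T 3, ← Real.rpow_mul hT0.le]
      norm_num
    rw [h3] at h2
    exact le_trans h2 (Real.rpow_le_rpow_of_exponent_le hT hβ)
  rw [Real.rpow_neg hT0.le, Real.rpow_neg hB0.le]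
  exact inv_anti₀ (Real.rpow_pos_of_pos hB0 γ) h1

theorem sw_bound {s w : ℝ} (hs : 1 ≤ s) (hw : 1 ≤ w) {a b β : ℝ}
    (ha : a ≤ -β) (hb : b ≤ -β) : s ^ a * w ^ b ≤ (s*w) ^ (-β) := by
  have hs0 : (0:ℝ) < s := lt_of_lt_of_le one_pos hs
  have hw0 : (0:ℝ) < w := lt_of_lt_of_le one_pos hw
  rw [Real.mul_rpow hs0.le hw0.le]
  exact mul_le_mul (Real.rpow_le_rpow_of_exponent_le hs ha)
    (Real.rpow_le_rpow_of_exponent_le hw hb) (by positivity) (by positivity)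

theorem Zsq (y : Fin 3 → ℝ) : Z y ^ 2 * S y ^ (3:ℕ) = y 0 ^ 2 := by
  have hs := S_pos y
  have h1 : (S y ^ (-(3:ℝ)/2)) ^ (2:ℕ) * S y ^ (3:ℕ) = 1 := by
    rw [← Real.rpow_natCast (S y ^ (-(3:ℝ)/2)) 2, ← Real.rpow_mul hs.le,
        ← Real.rpow_natCast (S y) 3, ← Real.rpow_add hs]
    norm_num
  calc Z y ^ 2 * S y ^ (3:ℕ)
      = (S y ^ (-(3:ℝ)/2)) ^ (2:ℕ) * S y ^ (3:ℕ) * y 0 ^ 2 := by rw [Z]; ring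
    _ = y 0 ^ 2 := by rw [h1]; ring

theorem trans_sq_le (y : Fin 3 → ℝ) (i : Fin 3) (hi : i ≠ 0) : y i ^ 2 ≤ S y := by
  fin_cases i
  · exact absurd rfl hi
  · show y 1 ^ 2 ≤ S y
    simp only [S]; nlinarith [sq_nonneg (y 2)]
  · show y 2 ^ 2 ≤ S y
    simp only [S]; nlinarith [sq_nonneg (y 1)]

theorem abs_trans_le (y : Fin 3 → ℝ) (i : Fin 3) (hi : i ≠ 0) : |y i| ≤ S y ^ ((1:ℝ)/2) := by
  rw [← Real.sqrt_eq_rpow, ← Real.sqrt_sq_eq_abs]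
  exact Real.sqrt_le_sqrt (trans_sq_le y i hi)

theorem abs_u_le (u : ℝ) : |u| ≤ (1 + 3*u^2) ^ ((1:ℝ)/2) := by
  rw [← Real.sqrt_eq_rpow, ← Real.sqrt_sq_eq_abs]
  exact Real.sqrt_le_sqrt (by nlinarith [sq_nonneg u])

theorem winv_cube (u : ℝ) : ((1 + 3*u^2)⁻¹)^(3:ℕ) = (1 + 3*u^2) ^ (-(3:ℝ)) := by
  have hw0 := w_pos u
  rw [inv_pow, ← Real.rpow_natCast (1 + 3*u^2) 3, ← Real.rpow_neg hw0.le]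
  norm_num

theorem u_w_bound (u : ℝ) : |u| * ((1 + 3*u^2)⁻¹)^(3:ℕ) ≤ (1 + 3*u^2) ^ (-(5:ℝ)/2) := by
  have hw0 := w_pos u
  calc |u| * ((1 + 3*u^2)⁻¹)^(3:ℕ)
      ≤ (1 + 3*u^2) ^ ((1:ℝ)/2) * (1 + 3*u^2) ^ (-(3:ℝ)) := by
        rw [winv_cube]
        exact mul_le_mul_of_nonneg_right (abs_u_le u) (by positivity)
    _ = (1 + 3*u^2) ^ (-(5:ℝ)/2) := by rw [← Real.rpow_add hw0]; norm_num

theorem abs_U1' (U : ℝ → ℝ) (z : ℝ) : |U1 U z| = (1 + 3*U z^2)⁻¹ := by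
  rw [U1, abs_neg, abs_inv, abs_of_pos (w_pos _)]

theorem abs_U2' (U : ℝ → ℝ) (z : ℝ) : |U2 U z| = 6 * (|U z| * ((1 + 3*U z^2)⁻¹)^(3:ℕ)) := by
  rw [U2, abs_mul, abs_neg, abs_mul, abs_pow, abs_inv, abs_of_pos (w_pos _)]
  rw [show |(6:ℝ)| = 6 by norm_num]
  ring

theorem abs_Gf (hU : ∀ z : ℝ, z = -U z - U z ^ 3) (t : ℝ) :
    |Gf U t| = 2 * |U t| * (1 + 3*U t^2)⁻¹ := by
  rw [Gf_eq hU t, abs_mul, abs_neg, abs_mul, abs_inv, abs_of_pos (w_pos _),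
    show |(2:ℝ)| = 2 by norm_num]

theorem two_abs_u_le (u : ℝ) : 2 * |u| ≤ 1 + 3*u^2 := by
  nlinarith [sq_abs u, sq_nonneg (|u| - 1), sq_nonneg u]

theorem abs_G1f_le (hU : ∀ z : ℝ, z = -U z - U z ^ 3) (t : ℝ) :
    |G1f U t| ≤ 2 * (1 + 3*U t^2) ^ (-(2:ℝ)) := by
  have hw0 := w_pos (U t)
  rw [G1f_eq hU t, abs_mul, abs_pow, abs_inv, abs_of_pos hw0]
  have h1 : |2 - 6*U t^2| ≤ 2 * (1 + 3*U t^2) := by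
    rw [abs_le]; constructor <;> nlinarith [sq_nonneg (U t)]
  calc |2 - 6*U t^2| * ((1 + 3*U t^2)⁻¹)^(3:ℕ)
      ≤ (2 * (1 + 3*U t^2)) * ((1 + 3*U t^2)⁻¹)^(3:ℕ) :=
        mul_le_mul_of_nonneg_right h1 (by positivity)
    _ = 2 * ((1 + 3*U t^2) ^ (1:ℝ) * (1 + 3*U t^2) ^ (-(3:ℝ))) := by
        rw [winv_cube, Real.rpow_one]; ring
    _ = 2 * (1 + 3*U t^2) ^ (-(2:ℝ)) := by rw [← Real.rpow_add hw0]; norm_num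

/-! ### The multivariate setup -/

theorem hasFDerivAt_coord (i : Fin 3) (y : Fin 3 → ℝ) :
    HasFDerivAt (fun y : Fin 3 → ℝ => y i)
      (ContinuousLinearMap.proj (R := ℝ) (φ := fun _ : Fin 3 => ℝ) i) y :=
  (ContinuousLinearMap.proj (R := ℝ) (φ := fun _ : Fin 3 => ℝ) i).hasFDerivAt

theorem masterA (Φ Φ' : ℝ → ℝ) (hΦ : ∀ t, HasDerivAt Φ (Φ' t) t) (r : ℝ) (y : Fin 3 → ℝ) :
    ∃ L : (Fin 3 → ℝ) →L[ℝ] ℝ, HasFDerivAt (fun y => S y ^ r * Φ (Z y)) L y ∧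
      L (Pi.single 0 1) = S y ^ (r - 3/2) * Φ' (Z y) ∧
      ∀ i : Fin 3, i ≠ 0 → L (Pi.single i 1)
        = y i * S y ^ (r - 1) * (2*r*Φ (Z y) - 3 * Z y * Φ' (Z y)) := by
  have hSy := S_pos y
  have hS : HasFDerivAt S
      ((0 : (Fin 3 → ℝ) →L[ℝ] ℝ)
        + ((2:ℕ) * y 1 ^ 1) • ContinuousLinearMap.proj (R := ℝ) (φ := fun _ : Fin 3 => ℝ) 1
        + ((2:ℕ) * y 2 ^ 1) • ContinuousLinearMap.proj (R := ℝ) (φ := fun _ : Fin 3 => ℝ) 2) y := by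
    exact ((hasFDerivAt_const (1:ℝ) y).add
        ((hasDerivAt_pow 2 (y 1)).comp_hasFDerivAt y (hasFDerivAt_coord 1 y))).add
      ((hasDerivAt_pow 2 (y 2)).comp_hasFDerivAt y (hasFDerivAt_coord 2 y))
  have hSr := hS.rpow_const (p := r) (Or.inl (ne_of_gt hSy))
  have hSm := hS.rpow_const (p := (-(3:ℝ)/2)) (Or.inl (ne_of_gt hSy))
  have hZ : HasFDerivAt Z _ y := hSm.mul (hasFDerivAt_coord 0 y)
  have hPZ := (hΦ (Z y)).comp_hasFDerivAt y hZ
  have hF := hSr.mul hPZ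
  have hsingle : ∀ (i j : Fin 3) (h : j ≠ i), (Pi.single i (1:ℝ) : Fin 3 → ℝ) j = 0 :=
    fun i j h => Pi.single_eq_of_ne h 1
  refine ⟨_, hF, ?_, ?_⟩
  · simp only [ContinuousLinearMap.add_apply, ContinuousLinearMap.smul_apply,
      ContinuousLinearMap.proj_apply, ContinuousLinearMap.zero_apply, smul_eq_mul,
      Function.comp_apply]
    rw [hsingle 0 1 (by decide), hsingle 0 2 (by decide), Pi.single_eq_same]
    have e0 : S y ^ r * S y ^ (-(3:ℝ)/2) = S y ^ (r - 3/2) := by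
      rw [← Real.rpow_add hSy]; ring_nf
    linear_combination Φ' (Z y) * e0
  · intro i hi
    have h12 : i = 1 ∨ i = 2 := by
      fin_cases i
      · exact absurd rfl hi
      · exact Or.inl rfl
      · exact Or.inr rfl
    have e1 : S y ^ r * S y ^ (-(3:ℝ)/2 - 1) = S y ^ (r-1) * S y ^ (-(3:ℝ)/2) := by
      rw [← Real.rpow_add hSy, ← Real.rpow_add hSy]; ring_nf
    rcases h12 with rfl | rfl
    · simp only [ContinuousLinearMap.add_apply, ContinuousLinearMap.smul_apply,
        ContinuousLinearMap.proj_apply, ContinuousLinearMap.zero_apply, smul_eq_mul,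
        Function.comp_apply, Z]
      rw [hsingle 1 0 (by decide), hsingle 1 2 (by decide), Pi.single_eq_same]
      linear_combination (-3*y 0*y 1*Φ' (S y ^ (-(3:ℝ)/2) * y 0)) * e1
    · simp only [ContinuousLinearMap.add_apply, ContinuousLinearMap.smul_apply,
        ContinuousLinearMap.proj_apply, ContinuousLinearMap.zero_apply, smul_eq_mul,
        Function.comp_apply, Z]
      rw [hsingle 2 0 (by decide), hsingle 2 1 (by decide), Pi.single_eq_same]
      linear_combination (-3*y 0*y 2*Φ' (S y ^ (-(3:ℝ)/2) * y 0)) * e1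

theorem masterB (Φ Φ' : ℝ → ℝ) (hΦ : ∀ t, HasDerivAt Φ (Φ' t) t) (r : ℝ) (μ : Fin 3)
    (hμ : μ ≠ 0) (y : Fin 3 → ℝ) :
    ∃ L : (Fin 3 → ℝ) →L[ℝ] ℝ,
      HasFDerivAt (fun y => y μ * (S y ^ r * Φ (Z y))) L y ∧
      L (Pi.single 0 1) = y μ * (S y ^ (r - 3/2) * Φ' (Z y)) ∧
      ∀ ν : Fin 3, ν ≠ 0 → L (Pi.single ν 1)
        = y μ * (y ν * S y ^ (r - 1) * (2*r*Φ (Z y) - 3 * Z y * Φ' (Z y)))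
          + (if μ = ν then 1 else 0) * (S y ^ r * Φ (Z y)) := by
  obtain ⟨L, hL, h0, hi⟩ := masterA Φ Φ' hΦ r y
  refine ⟨_, (hasFDerivAt_coord μ y).mul hL, ?_, ?_⟩
  · simp only [ContinuousLinearMap.add_apply, ContinuousLinearMap.smul_apply,
      ContinuousLinearMap.proj_apply, smul_eq_mul]
    rw [h0, Pi.single_eq_of_ne hμ 1]
    ring
  · intro ν hν
    simp only [ContinuousLinearMap.add_apply, ContinuousLinearMap.smul_apply,
      ContinuousLinearMap.proj_apply, smul_eq_mul]
    rw [hi ν hν, Pi.single_apply]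
    by_cases h : μ = ν
    · simp only [if_pos h]; ring
    · simp only [if_neg h]; ring

end SSB

set_option maxHeartbeats 1600000 in
open SSB in
/-- Weighted bounds for the 3D self-similar Burgers profile `W̄` and its first and
second partial derivatives, with weight `η(y) = 1 + y₁² + (y₂² + y₃²)³`. -/
theorem selfsimilar_burgers_profile_3d_bounds
    (Ubar : ℝ → ℝ) (hUbar : ∀ z : ℝ, z = -Ubar z - Ubar z ^ 3)
    (Wbar : (Fin 3 → ℝ) → ℝ)
    (hWbar : ∀ y : Fin 3 → ℝ,
      Wbar y = (1 + y 1 ^ 2 + y 2 ^ 2) ^ ((1 : ℝ) / 2)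
        * Ubar ((1 + y 1 ^ 2 + y 2 ^ 2) ^ (-(3 : ℝ) / 2) * y 0))
    (η : (Fin 3 → ℝ) → ℝ)
    (hη : ∀ y : Fin 3 → ℝ, η y = 1 + y 0 ^ 2 + (y 1 ^ 2 + y 2 ^ 2) ^ 3)
    (pd : Fin 3 → ((Fin 3 → ℝ) → ℝ) → (Fin 3 → ℝ) → ℝ)
    (hpd : ∀ (i : Fin 3) (f : (Fin 3 → ℝ) → ℝ) (y : Fin 3 → ℝ),
      pd i f y = fderiv ℝ f y (Pi.single i 1)) :
    ∃ C : ℝ, 0 < C ∧ ∀ y : Fin 3 → ℝ,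
      |Wbar y| ≤ C * η y ^ ((1 : ℝ) / 6) ∧
      |pd 0 Wbar y| ≤ C * η y ^ (-(1 : ℝ) / 3) ∧
      (∀ i : Fin 3, i ≠ 0 → |pd i Wbar y| ≤ C) ∧
      |pd 0 (pd 0 Wbar) y| ≤ C * η y ^ (-(1 : ℝ) / 2) ∧
      (∀ i : Fin 3, i ≠ 0 → |pd 0 (pd i Wbar) y| ≤ C * η y ^ (-(1 : ℝ) / 3)) ∧
      (∀ i j : Fin 3, i ≠ 0 → j ≠ 0 →
        |pd i (pd j Wbar) y| ≤ C * η y ^ (-(1 : ℝ) / 6)) := by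
  have hd : ∀ z, HasDerivAt Ubar (U1 Ubar z) z := U_hasDerivAt hUbar
  have hd1 : ∀ z, HasDerivAt (U1 Ubar) (U2 Ubar z) z := U1_hasDerivAt hd
  have hG : ∀ t, HasDerivAt (Gf Ubar) (G1f Ubar t) t := Gf_hasDerivAt hd
  have hWeq : Wbar = fun y => S y ^ ((1:ℝ)/2) * Ubar (Z y) := by
    funext y
    simp only [S, Z]
    exact hWbar y
  -- first derivatives as functions
  have hA0 : pd 0 Wbar = fun y => S y ^ ((1:ℝ)/2 - 3/2) * U1 Ubar (Z y) := by
    funext y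
    obtain ⟨L, hL, h0, _⟩ := masterA Ubar (U1 Ubar) hd ((1:ℝ)/2) y
    show pd 0 Wbar y = _
    rw [hpd, hWeq, hL.fderiv]
    exact h0
  have hAi : ∀ i : Fin 3, i ≠ 0 →
      pd i Wbar = fun y => y i * (S y ^ ((1:ℝ)/2 - 1) * Gf Ubar (Z y)) := by
    intro i hi
    funext y
    obtain ⟨L, hL, _, hval⟩ := masterA Ubar (U1 Ubar) hd ((1:ℝ)/2) y
    show pd i Wbar y = _
    rw [hpd, hWeq, hL.fderiv, hval i hi]
    simp only [Gf]
    ring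
  refine ⟨10, by norm_num, fun y => ?_⟩
  -- second derivative values at y
  have hB00 : pd 0 (pd 0 Wbar) y
      = S y ^ ((1:ℝ)/2 - 3/2 - 3/2) * U2 Ubar (Z y) := by
    obtain ⟨L, hL, h0, _⟩ := masterA (U1 Ubar) (U2 Ubar) hd1 ((1:ℝ)/2 - 3/2) y
    rw [hpd, hA0, hL.fderiv]
    exact h0
  have hB0i : ∀ i : Fin 3, i ≠ 0 → pd 0 (pd i Wbar) y
      = y i * (S y ^ ((1:ℝ)/2 - 1 - 3/2) * G1f Ubar (Z y)) := by
    intro i hi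
    obtain ⟨L, hL, h0, _⟩ := masterB (Gf Ubar) (G1f Ubar) hG ((1:ℝ)/2 - 1) i hi y
    rw [hpd, hAi i hi, hL.fderiv]
    exact h0
  have hBij : ∀ i j : Fin 3, i ≠ 0 → j ≠ 0 → pd i (pd j Wbar) y
      = y j * (y i * S y ^ ((1:ℝ)/2 - 1 - 1)
          * (2*((1:ℝ)/2 - 1)*Gf Ubar (Z y) - 3 * Z y * G1f Ubar (Z y)))
        + (if j = i then 1 else 0) * (S y ^ ((1:ℝ)/2 - 1) * Gf Ubar (Z y)) := by
    intro i j hi hj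
    obtain ⟨L, hL, _, hval⟩ := masterB (Gf Ubar) (G1f Ubar) hG ((1:ℝ)/2 - 1) j hj y
    rw [hpd, hAi j hj, hL.fderiv]
    exact hval i hi
  -- notation and basic facts at the point y
  have hs0 : (0:ℝ) < S y := S_pos y
  have hs1 : (1:ℝ) ≤ S y := one_le_S y
  set u : ℝ := Ubar (Z y) with hu
  have hw0 : (0:ℝ) < 1 + 3*u^2 := w_pos u
  have hw1 : (1:ℝ) ≤ 1 + 3*u^2 := by nlinarith [sq_nonneg u]
  have hzu : Z y = -u - u^3 := hUbar (Z y)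
  have hz2 : Z y ^ 2 = (u + u^3)^2 := by rw [hzu]; ring
  have hT1 : (1:ℝ) ≤ S y * (1 + 3*u^2) := by nlinarith
  have hη1 : (1:ℝ) ≤ η y := by
    rw [hη]
    have h01 : (0:ℝ) ≤ y 1 ^ 2 + y 2 ^ 2 := by positivity
    nlinarith [sq_nonneg (y 0), pow_nonneg h01 3]
  have hy02 : y 0 ^ 2 ≤ η y := by
    rw [hη]
    have h01 : (0:ℝ) ≤ y 1 ^ 2 + y 2 ^ 2 := by positivity
    nlinarith [pow_nonneg h01 3]
  have hηT : η y ≤ (S y * (1 + 3*u^2)) ^ (3:ℕ) := by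
    have h1 : 1 + Z y ^ 2 ≤ (1 + 3*u^2) ^ (3:ℕ) := by
      rw [hz2]
      nlinarith [sq_nonneg u, sq_nonneg (u^2), sq_nonneg (u^3), sq_nonneg (u*u^2)]
    have h2 : η y ≤ S y ^ (3:ℕ) + y 0 ^ 2 := by
      rw [hη]
      simp only [S]
      have h01 : (0:ℝ) ≤ y 1 ^ 2 + y 2 ^ 2 := by positivity
      nlinarith [pow_nonneg h01 2, pow_nonneg h01 3]
    calc η y ≤ S y ^ (3:ℕ) + y 0 ^ 2 := h2
      _ = S y ^ (3:ℕ) * (1 + Z y ^ 2) := by rw [← Zsq y]; ring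
      _ ≤ S y ^ (3:ℕ) * (1 + 3*u^2) ^ (3:ℕ) := by
          exact mul_le_mul_of_nonneg_left h1 (by positivity)
      _ = (S y * (1 + 3*u^2)) ^ (3:ℕ) := by rw [mul_pow]
  have hηpow : ∀ γ : ℝ, (0:ℝ) ≤ η y ^ (-γ) := fun γ => by positivity
  -- Bound 1
  have hb1 : |Wbar y| ≤ 10 * η y ^ ((1:ℝ)/6) := by
    have hval : Wbar y = S y ^ ((1:ℝ)/2) * Ubar (Z y) := by rw [hWeq]
    rw [hval, abs_mul, abs_of_pos (Real.rpow_pos_of_pos hs0 _)]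
    have h6 : (S y ^ ((1:ℝ)/2) * |u|) ^ (6:ℕ) ≤ η y := by
      have hsp : (S y ^ ((1:ℝ)/2)) ^ (6:ℕ) = S y ^ (3:ℕ) := by
        rw [← Real.rpow_natCast (S y ^ ((1:ℝ)/2)) 6, ← Real.rpow_mul hs0.le,
          ← Real.rpow_natCast (S y) 3]
        norm_num
      have habs : |u| ^ (6:ℕ) = u ^ 6 := by
        rw [pow_abs, abs_of_nonneg (by positivity : (0:ℝ) ≤ u ^ 6)]
      have hu6 : u ^ 6 ≤ Z y ^ 2 := by
        rw [hz2]; nlinarith [sq_nonneg u, sq_nonneg (u^2)]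
      calc (S y ^ ((1:ℝ)/2) * |u|) ^ (6:ℕ) = S y ^ (3:ℕ) * u ^ 6 := by
            rw [mul_pow, hsp, habs]
        _ ≤ S y ^ (3:ℕ) * Z y ^ 2 := mul_le_mul_of_nonneg_left hu6 (by positivity)
        _ = y 0 ^ 2 := by rw [← Zsq y]; ring
        _ ≤ η y := hy02
    have := pow6_le (by positivity) h6
    have hnn : (0:ℝ) ≤ η y ^ ((1:ℝ)/6) := by positivity
    linarith
  -- Bound 2
  have hb2 : |pd 0 Wbar y| ≤ 10 * η y ^ (-(1:ℝ)/3) := by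
    have hval : pd 0 Wbar y = S y ^ ((1:ℝ)/2 - 3/2) * U1 Ubar (Z y) := by rw [hA0]
    rw [hval, abs_mul, abs_of_pos (Real.rpow_pos_of_pos hs0 _), abs_U1', ← hu]
    have h1 : S y ^ ((1:ℝ)/2 - 3/2) * (1 + 3*u^2)⁻¹
        ≤ (S y * (1 + 3*u^2)) ^ (-(1:ℝ)) := by
      have e1 : (1 + 3*u^2)⁻¹ = (1 + 3*u^2) ^ (-(1:ℝ)) := by
        rw [Real.rpow_neg_one]
      rw [e1]
      exact sw_bound hs1 hw1 (by norm_num) (by norm_num)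
    have h2 : (S y * (1 + 3*u^2)) ^ (-(1:ℝ)) ≤ η y ^ (-((1:ℝ)/3)) :=
      key_neg hT1 hη1 hηT (by norm_num) (by norm_num)
    rw [show (-(1:ℝ)/3) = -((1:ℝ)/3) by norm_num]
    have := hηpow ((1:ℝ)/3)
    linarith
  -- Bound 3
  have hb3 : ∀ i : Fin 3, i ≠ 0 → |pd i Wbar y| ≤ 10 := by
    intro i hi
    have hval : pd i Wbar y = y i * (S y ^ ((1:ℝ)/2 - 1) * Gf Ubar (Z y)) := by
      rw [hAi i hi]
    rw [hval, abs_mul, abs_mul, abs_of_pos (Real.rpow_pos_of_pos hs0 _), abs_Gf hUbar, ← hu]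
    have hAB : S y ^ ((1:ℝ)/2) * S y ^ ((1:ℝ)/2 - 1) = 1 := by
      rw [← Real.rpow_add hs0]
      norm_num
    have hg1 : 2 * |u| * (1 + 3*u^2)⁻¹ ≤ 1 := by
      have h := mul_le_mul_of_nonneg_right (two_abs_u_le u) (inv_nonneg.mpr hw0.le)
      rwa [mul_inv_cancel₀ (ne_of_gt hw0)] at h
    calc |y i| * (S y ^ ((1:ℝ)/2 - 1) * (2 * |u| * (1 + 3*u^2)⁻¹))
        ≤ S y ^ ((1:ℝ)/2) * (S y ^ ((1:ℝ)/2 - 1) * (2 * |u| * (1 + 3*u^2)⁻¹)) :=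
          mul_le_mul_of_nonneg_right (abs_trans_le y i hi) (by positivity)
      _ = (S y ^ ((1:ℝ)/2) * S y ^ ((1:ℝ)/2 - 1)) * (2 * |u| * (1 + 3*u^2)⁻¹) := by ring
      _ = 2 * |u| * (1 + 3*u^2)⁻¹ := by rw [hAB, one_mul]
      _ ≤ 1 := hg1
      _ ≤ 10 := by norm_num
  -- Bound 4
  have hb4 : |pd 0 (pd 0 Wbar) y| ≤ 10 * η y ^ (-(1:ℝ)/2) := by
    rw [hB00, abs_mul, abs_of_pos (Real.rpow_pos_of_pos hs0 _), abs_U2', ← hu]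
    have h1 : S y ^ ((1:ℝ)/2 - 3/2 - 3/2) * (6 * (|u| * ((1 + 3*u^2)⁻¹)^(3:ℕ)))
        ≤ 6 * ((S y * (1 + 3*u^2)) ^ (-(3:ℝ)/2)) := by
      have h2 : S y ^ ((1:ℝ)/2 - 3/2 - 3/2) * (1 + 3*u^2) ^ (-(5:ℝ)/2)
          ≤ (S y * (1 + 3*u^2)) ^ (-((3:ℝ)/2)) :=
        sw_bound hs1 hw1 (by norm_num) (by norm_num)
      have h3 := mul_le_mul_of_nonneg_left (u_w_bound u)
        (by positivity : (0:ℝ) ≤ S y ^ ((1:ℝ)/2 - 3/2 - 3/2))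
      rw [show (-((3:ℝ)/2)) = (-(3:ℝ)/2) by norm_num] at h2
      calc S y ^ ((1:ℝ)/2 - 3/2 - 3/2) * (6 * (|u| * ((1 + 3*u^2)⁻¹)^(3:ℕ)))
          = 6 * (S y ^ ((1:ℝ)/2 - 3/2 - 3/2) * (|u| * ((1 + 3*u^2)⁻¹)^(3:ℕ))) := by ring
        _ ≤ 6 * (S y ^ ((1:ℝ)/2 - 3/2 - 3/2) * (1 + 3*u^2) ^ (-(5:ℝ)/2)) := by linarith
        _ ≤ 6 * ((S y * (1 + 3*u^2)) ^ (-(3:ℝ)/2)) := by linarith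
    have h4 : (S y * (1 + 3*u^2)) ^ (-(3:ℝ)/2) ≤ η y ^ (-((1:ℝ)/2)) := by
      rw [show (-(3:ℝ)/2) = -((3:ℝ)/2) by norm_num]
      exact key_neg hT1 hη1 hηT (by norm_num) (by norm_num)
    rw [show (-(1:ℝ)/2) = -((1:ℝ)/2) by norm_num]
    have h5 := mul_le_mul_of_nonneg_left h4 (by norm_num : (0:ℝ) ≤ (6:ℝ))
    have := hηpow ((1:ℝ)/2)
    linarith
  -- Bound 5
  have hb5 : ∀ i : Fin 3, i ≠ 0 → |pd 0 (pd i Wbar) y| ≤ 10 * η y ^ (-(1:ℝ)/3) := by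
    intro i hi
    rw [hB0i i hi, abs_mul, abs_mul, abs_of_pos (Real.rpow_pos_of_pos hs0 _)]
    have h1 : |y i| * (S y ^ ((1:ℝ)/2 - 1 - 3/2) * |G1f Ubar (Z y)|)
        ≤ 2 * ((S y ^ ((1:ℝ)/2) * S y ^ ((1:ℝ)/2 - 1 - 3/2)) * (1 + 3*u^2) ^ (-(2:ℝ))) := by
      have h2 := abs_G1f_le hUbar (Z y)
      rw [← hu] at h2
      have h3 : S y ^ ((1:ℝ)/2 - 1 - 3/2) * |G1f Ubar (Z y)|
          ≤ S y ^ ((1:ℝ)/2 - 1 - 3/2) * (2 * (1 + 3*u^2) ^ (-(2:ℝ))) :=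
        mul_le_mul_of_nonneg_left h2 (by positivity)
      calc |y i| * (S y ^ ((1:ℝ)/2 - 1 - 3/2) * |G1f Ubar (Z y)|)
          ≤ S y ^ ((1:ℝ)/2) * (S y ^ ((1:ℝ)/2 - 1 - 3/2) * (2 * (1 + 3*u^2) ^ (-(2:ℝ)))) := by
            apply mul_le_mul (abs_trans_le y i hi) h3 (by positivity) (by positivity)
        _ = 2 * ((S y ^ ((1:ℝ)/2) * S y ^ ((1:ℝ)/2 - 1 - 3/2)) * (1 + 3*u^2) ^ (-(2:ℝ))) := by
            ring
    have hAB : S y ^ ((1:ℝ)/2) * S y ^ ((1:ℝ)/2 - 1 - 3/2) = S y ^ (-(3:ℝ)/2) := by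
      rw [← Real.rpow_add hs0]
      norm_num
    rw [hAB] at h1
    have h2 : S y ^ (-(3:ℝ)/2) * (1 + 3*u^2) ^ (-(2:ℝ))
        ≤ (S y * (1 + 3*u^2)) ^ (-(1:ℝ)) :=
      sw_bound hs1 hw1 (by norm_num) (by norm_num)
    have h4 : (S y * (1 + 3*u^2)) ^ (-(1:ℝ)) ≤ η y ^ (-((1:ℝ)/3)) :=
      key_neg hT1 hη1 hηT (by norm_num) (by norm_num)
    rw [show (-(1:ℝ)/3) = -((1:ℝ)/3) by norm_num]
    have h5 := mul_le_mul_of_nonneg_left (le_trans h2 h4) (by norm_num : (0:ℝ) ≤ (2:ℝ))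
    have := hηpow ((1:ℝ)/3)
    linarith
  -- Bound 6
  have hb6 : ∀ i j : Fin 3, i ≠ 0 → j ≠ 0 →
      |pd i (pd j Wbar) y| ≤ 10 * η y ^ (-(1:ℝ)/6) := by
    intro i j hi hj
    rw [hBij i j hi hj, Hf_eq hUbar (Z y), Gf_eq hUbar (Z y), ← hu]
    have hterm1 : |y j * (y i * S y ^ ((1:ℝ)/2 - 1 - 1) * (8*u * ((1 + 3*u^2)⁻¹)^3))|
        ≤ 8 * (S y ^ (-(1:ℝ)/2) * (1 + 3*u^2) ^ (-(1:ℝ)/2)) := by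
      have e1 : |y j * (y i * S y ^ ((1:ℝ)/2 - 1 - 1) * (8*u * ((1 + 3*u^2)⁻¹)^3))|
          = |y j| * |y i| * S y ^ ((1:ℝ)/2 - 1 - 1) * (8 * (|u| * ((1 + 3*u^2)⁻¹)^(3:ℕ))) := by
        simp only [abs_mul, abs_pow, abs_inv]
        rw [abs_of_pos (Real.rpow_pos_of_pos hs0 _), abs_of_pos hw0,
          show |(8:ℝ)| = 8 by norm_num]
        ring
      rw [e1]
      have h2 : |y j| * |y i| * S y ^ ((1:ℝ)/2 - 1 - 1)
          ≤ S y ^ ((1:ℝ)/2) * S y ^ ((1:ℝ)/2) * S y ^ ((1:ℝ)/2 - 1 - 1) := by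
        apply mul_le_mul_of_nonneg_right _ (by positivity)
        exact mul_le_mul (abs_trans_le y j hj) (abs_trans_le y i hi) (abs_nonneg _)
          (by positivity)
      have h3 : S y ^ ((1:ℝ)/2) * S y ^ ((1:ℝ)/2) * S y ^ ((1:ℝ)/2 - 1 - 1)
          = S y ^ (-(1:ℝ)/2) := by
        rw [← Real.rpow_add hs0, ← Real.rpow_add hs0]
        norm_num
      have h4 : |u| * ((1 + 3*u^2)⁻¹)^(3:ℕ) ≤ (1 + 3*u^2) ^ (-(1:ℝ)/2) := by
        refine le_trans (u_w_bound u) ?_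
        exact Real.rpow_le_rpow_of_exponent_le hw1 (by norm_num)
      calc |y j| * |y i| * S y ^ ((1:ℝ)/2 - 1 - 1) * (8 * (|u| * ((1 + 3*u^2)⁻¹)^(3:ℕ)))
          ≤ (S y ^ ((1:ℝ)/2) * S y ^ ((1:ℝ)/2) * S y ^ ((1:ℝ)/2 - 1 - 1))
            * (8 * (1 + 3*u^2) ^ (-(1:ℝ)/2)) := by
            apply mul_le_mul h2 _ (by positivity) (by positivity)
            linarith [mul_le_mul_of_nonneg_left h4 (by norm_num : (0:ℝ) ≤ (8:ℝ))]
        _ = 8 * (S y ^ (-(1:ℝ)/2) * (1 + 3*u^2) ^ (-(1:ℝ)/2)) := by rw [h3]; ring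
    have hterm2 : |(if j = i then (1:ℝ) else 0) * (S y ^ ((1:ℝ)/2 - 1) * (-(2*u) * (1 + 3*u^2)⁻¹))|
        ≤ 2 * (S y ^ (-(1:ℝ)/2) * (1 + 3*u^2) ^ (-(1:ℝ)/2)) := by
      have hδ : |(if j = i then (1:ℝ) else 0)| ≤ 1 := by
        by_cases h : j = i <;> simp [h]
      have e2 : |S y ^ ((1:ℝ)/2 - 1) * (-(2*u) * (1 + 3*u^2)⁻¹)|
          = S y ^ ((1:ℝ)/2 - 1) * (2 * |u| * (1 + 3*u^2)⁻¹) := by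
        rw [abs_mul, abs_of_pos (Real.rpow_pos_of_pos hs0 _), abs_mul, abs_neg, abs_mul,
          abs_inv, abs_of_pos hw0, show |(2:ℝ)| = 2 by norm_num]
      have h5 : 2 * |u| * (1 + 3*u^2)⁻¹ ≤ 2 * (1 + 3*u^2) ^ (-(1:ℝ)/2) := by
        have h6 : |u| * (1 + 3*u^2)⁻¹ ≤ (1 + 3*u^2) ^ (-(1:ℝ)/2) := by
          have e3 : (1 + 3*u^2)⁻¹ = (1 + 3*u^2) ^ (-(1:ℝ)) := by rw [Real.rpow_neg_one]
          rw [e3]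
          calc |u| * (1 + 3*u^2) ^ (-(1:ℝ))
              ≤ (1 + 3*u^2) ^ ((1:ℝ)/2) * (1 + 3*u^2) ^ (-(1:ℝ)) :=
                mul_le_mul_of_nonneg_right (abs_u_le u) (by positivity)
            _ = (1 + 3*u^2) ^ (-(1:ℝ)/2) := by rw [← Real.rpow_add hw0]; norm_num
        linarith [mul_le_mul_of_nonneg_left h6 (by norm_num : (0:ℝ) ≤ (2:ℝ))]
      have hS12 : S y ^ ((1:ℝ)/2 - 1) = S y ^ (-(1:ℝ)/2) := by norm_num
      rw [abs_mul, e2, hS12]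
      have hnn : (0:ℝ) ≤ S y ^ (-(1:ℝ)/2) := by positivity
      calc |(if j = i then (1:ℝ) else 0)| * (S y ^ (-(1:ℝ)/2) * (2 * |u| * (1 + 3*u^2)⁻¹))
          ≤ 1 * (S y ^ (-(1:ℝ)/2) * (2 * (1 + 3*u^2) ^ (-(1:ℝ)/2))) := by
            apply mul_le_mul hδ (mul_le_mul_of_nonneg_left h5 hnn) (by positivity) (by norm_num)
        _ = 2 * (S y ^ (-(1:ℝ)/2) * (1 + 3*u^2) ^ (-(1:ℝ)/2)) := by ring
    have hsw : S y ^ (-(1:ℝ)/2) * (1 + 3*u^2) ^ (-(1:ℝ)/2)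
        ≤ (S y * (1 + 3*u^2)) ^ (-((1:ℝ)/2)) :=
      sw_bound hs1 hw1 (by norm_num) (by norm_num)
    have hkn : (S y * (1 + 3*u^2)) ^ (-((1:ℝ)/2)) ≤ η y ^ (-((1:ℝ)/6)) :=
      key_neg hT1 hη1 hηT (by norm_num) (by norm_num)
    rw [show (-(1:ℝ)/6) = -((1:ℝ)/6) by norm_num]
    have := hηpow ((1:ℝ)/6)
    calc |y j * (y i * S y ^ ((1:ℝ)/2 - 1 - 1) * (8*u * ((1 + 3*u^2)⁻¹)^3))
          + (if j = i then (1:ℝ) else 0) * (S y ^ ((1:ℝ)/2 - 1) * (-(2*u) * (1 + 3*u^2)⁻¹))|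
        ≤ |y j * (y i * S y ^ ((1:ℝ)/2 - 1 - 1) * (8*u * ((1 + 3*u^2)⁻¹)^3))|
          + |(if j = i then (1:ℝ) else 0) * (S y ^ ((1:ℝ)/2 - 1) * (-(2*u) * (1 + 3*u^2)⁻¹))| :=
          abs_add_le _ _
      _ ≤ 10 * (S y ^ (-(1:ℝ)/2) * (1 + 3*u^2) ^ (-(1:ℝ)/2)) := by linarith
      _ ≤ 10 * η y ^ (-((1:ℝ)/6)) := by
          linarith [mul_le_mul_of_nonneg_left (le_trans hsw hkn) (by norm_num : (0:ℝ) ≤ (10:ℝ))]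
  exact ⟨hb1, hb2, hb3, hb4, hb5, hb6⟩
end

section
/- Let a < 1 with a ≠ 0, let T ∈ (-1, ∞], and let u : ℝ × [-1, T) → ℝ be a C² solution of the damped Burgers equation ∂ₜu + u ∂ₓu = -au with u(0, -1) = 0 and ∂ₓu(0, -1) = -1. Then u(0, t) = 0 and ∂ₓu(0, t) = a e^{-a(t+1)} / ((1 - a) - e^{-a(t+1)}) for all t ∈ [-1, T); consequently T ≤ T★ := -(1/a) ln(1 - a) - 1, and if T = T★ then ∂ₓu(0, t) → -∞ as t → T★⁻. Thus when a < 1 the damping cannot prevent shock formation, and the blow-up time is T★ (which is > 0 for 0 < a < 1, delayed relative to the undamped case, and < 0 for a < 0, advanced), while the blow-up location remains x★ = 0. -/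
open Set Filter

/-- Shifted shock formation for the damped Burgers equation with `a < 1`, `a ≠ 0`:
for a C² solution with `u(0,-1) = 0`, `∂ₓu(0,-1) = -1`, one has `u(0,t) = 0`,
`∂ₓu(0,t) = a e^{-a(t+1)}/((1-a) - e^{-a(t+1)})`, `T ≤ T★ = -(1/a)ln(1-a) - 1`
(with `T★ > 0` for `0 < a < 1` and `T★ < 0` for `a < 0`), and if `T = T★` then
`∂ₓu(0,t) → -∞` as `t → T★⁻`; the blow-up location remains `x★ = 0`. -/
theorem damped_burgers_shifted_shock
    (a : ℝ) (ha0 : a ≠ 0) (ha1 : a < 1)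
    (T : EReal) (hT : (-1 : EReal) < T)
    (u : ℝ → ℝ → ℝ)
    (hreg : ContDiffOn ℝ 2 (fun p : ℝ × ℝ => u p.1 p.2)
      {p : ℝ × ℝ | -1 ≤ p.2 ∧ (p.2 : EReal) < T})
    (heq : ∀ x t : ℝ, -1 ≤ t → (t : EReal) < T →
      ∃ ut : ℝ, HasDerivWithinAt (fun t' => u x t') ut (Ici (-1 : ℝ)) t ∧
        ut + u x t * deriv (fun x' => u x' t) x = -a * u x t)
    (h0 : u 0 (-1) = 0)
    (h1 : deriv (fun x' => u x' (-1)) 0 = -1) :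
    (∀ t : ℝ, -1 ≤ t → (t : EReal) < T →
      u 0 t = 0 ∧
      deriv (fun x' => u x' t) 0
        = a * Real.exp (-a * (t + 1)) / ((1 - a) - Real.exp (-a * (t + 1)))) ∧
    T ≤ ((-(1 / a) * Real.log (1 - a) - 1 : ℝ) : EReal) ∧
    (0 < a → 0 < -(1 / a) * Real.log (1 - a) - 1) ∧
    (a < 0 → -(1 / a) * Real.log (1 - a) - 1 < 0) ∧
    (T = ((-(1 / a) * Real.log (1 - a) - 1 : ℝ) : EReal) →
      Tendsto (fun t : ℝ => deriv (fun x' => u x' t) 0)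
        (nhdsWithin (-(1 / a) * Real.log (1 - a) - 1)
          (Iio (-(1 / a) * Real.log (1 - a) - 1))) atBot) := by
  classical
  set T₁ : ℝ := -(1 / a) * Real.log (1 - a) - 1 with hT₁def
  set ψ : ℝ → ℝ := fun t => a * Real.exp (-a * (t + 1)) / ((1 - a) - Real.exp (-a * (t + 1)))
    with hψdef
  have h1a : (0:ℝ) < 1 - a := by linarith
  have hlog : Real.log (1 - a) < -a := by
    have := Real.log_lt_sub_one_of_pos h1a (fun h => ha0 (by linarith))
    linarith
  have hexpT₁ : Real.exp (-a * (T₁ + 1)) = 1 - a := by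
    have h : -a * (T₁ + 1) = Real.log (1 - a) := by
      rw [hT₁def]; field_simp; ring
    rw [h, Real.exp_log h1a]
  have hT₁gt : -1 < T₁ := by
    rcases ha0.lt_or_gt with hneg | hpos
    · have hL : 0 < Real.log (1 - a) := Real.log_pos (by linarith)
      have h2 : 0 < -(1/a) := by
        rw [neg_pos]; exact one_div_neg.2 hneg
      have := mul_pos h2 hL
      rw [hT₁def]; linarith
    · have hL : Real.log (1 - a) < 0 := Real.log_neg h1a (by linarith)
      have h2 : 0 < (1/a) := one_div_pos.2 hpos
      have := mul_pos h2 (neg_pos.2 hL)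
      rw [hT₁def]; nlinarith
  have hsign : ∀ t : ℝ, t < T₁ → a * ((1 - a) - Real.exp (-a * (t + 1))) < 0 := by
    intro t ht
    rcases ha0.lt_or_gt with hneg | hpos
    · have h2 : Real.exp (-a * (t+1)) < Real.exp (-a * (T₁+1)) := by
        apply Real.exp_lt_exp.2; nlinarith
      rw [hexpT₁] at h2
      nlinarith
    · have h2 : Real.exp (-a * (T₁+1)) < Real.exp (-a * (t+1)) := by
        apply Real.exp_lt_exp.2; nlinarith
      rw [hexpT₁] at h2
      nlinarith
  have hψ1 : ψ (-1) = -1 := by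
    rw [hψdef]
    norm_num
    field_simp
  have hψd : ∀ t : ℝ, t < T₁ → HasDerivAt ψ (-a * ψ t - ψ t ^ 2) t := by
    intro t ht
    have hdne : (1 - a) - Real.exp (-a * (t + 1)) ≠ 0 := by
      intro h; have := hsign t ht; rw [h] at this; simp at this
    have hinner : HasDerivAt (fun t' : ℝ => -a * (t' + 1)) (-a) t := by
      simpa using ((hasDerivAt_id t).add_const 1).const_mul (-a)
    have hexp : HasDerivAt (fun t' : ℝ => Real.exp (-a * (t' + 1)))
        (Real.exp (-a * (t + 1)) * -a) t := hinner.exp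
    have hnum : HasDerivAt (fun t' : ℝ => a * Real.exp (-a * (t' + 1)))
        (a * (Real.exp (-a * (t + 1)) * -a)) t := hexp.const_mul a
    have hden : HasDerivAt (fun t' : ℝ => (1 - a) - Real.exp (-a * (t' + 1)))
        (-(Real.exp (-a * (t + 1)) * -a)) t := hexp.const_sub (1 - a)
    have key : ∀ e d : ℝ, d ≠ 0 →
        -a * (a * e / d) - (a * e / d) ^ 2 = (a * (e * -a) * d - a * e * -(e * -a)) / d ^ 2 := by
      intro e d hd; field_simp
    have hψt : ψ t = a * Real.exp (-a * (t + 1)) / (1 - a - Real.exp (-a * (t + 1))) := rfl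
    have := hnum.div hden hdne
    exact this.congr_deriv (by rw [hψt]; exact (key _ _ hdne).symm)
  -- PDE setup
  set F : ℝ × ℝ → ℝ := fun p => u p.1 p.2 with hFdef
  set S : Set (ℝ × ℝ) := {p : ℝ × ℝ | -1 ≤ p.2 ∧ (p.2 : EReal) < T} with hSdef
  set I : Set ℝ := {t : ℝ | -1 ≤ t ∧ (t : EReal) < T} with hIdef
  have hmem : ∀ (x t : ℝ), (x, t) ∈ S ↔ t ∈ I := fun x t => Iff.rfl
  have hIsub : I ⊆ Ici (-1 : ℝ) := fun t ht => ht.1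
  have hIord : ∀ {t₁ t₂ s : ℝ}, t₁ ∈ I → t₂ ∈ I → t₁ ≤ s → s ≤ t₂ → s ∈ I := by
    intro t₁ t₂ s h₁ h₂ hs₁ hs₂
    exact ⟨le_trans h₁.1 hs₁, lt_of_le_of_lt (EReal.coe_le_coe_iff.2 hs₂) h₂.2⟩
  have h1I : (-1 : ℝ) ∈ I := ⟨le_refl _, hT⟩
  have hnext : ∀ t ∈ I, ∃ t', t < t' ∧ t' ∈ I := by
    intro t ht
    obtain ⟨x, hx1, hx2⟩ := EReal.lt_iff_exists_real_btwn.1 ht.2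
    exact ⟨x, EReal.coe_lt_coe_iff.1 hx1, le_trans ht.1 (EReal.coe_lt_coe_iff.1 hx1).le, hx2⟩
  have hIconv : Convex ℝ I :=
    Set.OrdConnected.convex ⟨fun x hx y hy z hz => hIord hx hy hz.1 hz.2⟩
  have hIoo : ∀ t' ∈ I, Ioo (-1 : ℝ) t' ⊆ interior I := by
    intro t' ht'
    rw [← isOpen_Ioo.interior_eq]
    exact interior_mono (fun z hz => hIord h1I ht' hz.1.le hz.2.le)
  have hIint : (interior I).Nonempty := by
    obtain ⟨t', ht1, ht2⟩ := hnext (-1) h1I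
    exact ⟨(-1 + t') / 2, hIoo t' ht2 ⟨by linarith, by linarith⟩⟩
  have hIclos : ∀ t ∈ I, t ∈ closure (interior I) := by
    intro t ht
    obtain ⟨t', ht1, ht2⟩ := hnext t ht
    have h3 : t ∈ closure (Ioo (-1 : ℝ) t') := by
      rw [closure_Ioo (by linarith [ht.1] : (-1:ℝ) ≠ t')]
      exact ⟨ht.1, ht1.le⟩
    exact closure_mono (hIoo t' ht2) h3
  have hSprod : S = (univ : Set ℝ) ×ˢ I := by
    ext p; simp [hSdef, hIdef, Set.mem_prod]
  have hSconv : Convex ℝ S := hSprod ▸ convex_univ.prod hIconv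
  have hSint : interior S = (univ : Set ℝ) ×ˢ interior I := by
    rw [hSprod, interior_prod_eq, interior_univ]
  have hSu : UniqueDiffOn ℝ S := by
    apply uniqueDiffOn_convex hSconv
    rw [hSint]
    exact (univ_nonempty).prod hIint
  have hIu : ∀ t ∈ I, UniqueDiffWithinAt ℝ I t := by
    intro t ht
    obtain ⟨t', ht1, ht2⟩ := hnext t ht
    exact (uniqueDiffOn_Icc ht1 t ⟨le_rfl, ht1.le⟩).mono
      (fun z hz => hIord ht ht2 hz.1 hz.2)
  have hSclos : ∀ p ∈ S, p ∈ closure (interior S) := by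
    intro p hp
    rw [hSint, closure_prod_eq]
    exact ⟨by simp, hIclos p.2 ((hmem p.1 p.2).1 (by exact hp))⟩
  have hdiff : DifferentiableOn ℝ F S := hreg.differentiableOn (by norm_num)
  have hD : ∀ p ∈ S, HasFDerivWithinAt F (fderivWithin ℝ F S p) S p :=
    fun p hp => (hdiff p hp).hasFDerivWithinAt
  have hxslice : ∀ (x t : ℝ), t ∈ I →
      HasDerivAt (fun x' => u x' t) (fderivWithin ℝ F S (x, t) ((1:ℝ), (0:ℝ))) x := by
    intro x t ht
    have hg : HasDerivWithinAt (fun x' : ℝ => ((x' : ℝ), t)) ((1:ℝ), (0:ℝ)) univ x :=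
      ((hasDerivAt_id x).prodMk (hasDerivAt_const x t)).hasDerivWithinAt
    have := (hD (x, t) ((hmem x t).2 ht)).comp_hasDerivWithinAt x hg
      (fun s _ => (hmem s t).2 ht)
    rw [hasDerivWithinAt_univ] at this
    exact this
  have hderiv0 : ∀ (x t : ℝ), t ∈ I →
      deriv (fun x' => u x' t) x = fderivWithin ℝ F S (x, t) ((1:ℝ), (0:ℝ)) :=
    fun x t ht => (hxslice x t ht).deriv
  have htslice : ∀ (x t : ℝ), t ∈ I →
      HasDerivWithinAt (fun t' => u x t') (fderivWithin ℝ F S (x, t) ((0:ℝ), (1:ℝ))) I t := by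
    intro x t ht
    have hg : HasDerivWithinAt (fun t' : ℝ => ((x : ℝ), t')) ((0:ℝ), (1:ℝ)) I t :=
      ((hasDerivAt_const t x).prodMk (hasDerivAt_id t)).hasDerivWithinAt
    exact (hD (x, t) ((hmem x t).2 ht)).comp_hasDerivWithinAt t hg
      (fun s hs => (hmem x s).2 hs)
  have hG : ∀ (x t : ℝ), t ∈ I →
      fderivWithin ℝ F S (x, t) ((0:ℝ), (1:ℝ))
        = -a * u x t - u x t * fderivWithin ℝ F S (x, t) ((1:ℝ), (0:ℝ)) := by
    intro x t ht
    obtain ⟨ut, hut, heqn⟩ := heq x t ht.1 ht.2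
    have h2 : fderivWithin ℝ F S (x, t) ((0:ℝ), (1:ℝ)) = ut := by
      rw [← (htslice x t ht).derivWithin (hIu t ht), ← (hut.mono hIsub).derivWithin (hIu t ht)]
    rw [h2, hderiv0 x t ht] at *
    linarith
  have hD1 : ContDiffOn ℝ 1 (fun p => fderivWithin ℝ F S p) S :=
    hreg.fderivWithin hSu (by norm_num)
  have hDd : ∀ p ∈ S, HasFDerivWithinAt (fun q => fderivWithin ℝ F S q)
      (fderivWithin ℝ (fun q => fderivWithin ℝ F S q) S p) S p :=
    fun p hp => ((hD1.differentiableOn (by norm_num)) p hp).hasFDerivWithinAt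
  set V : ℝ → ℝ := fun t => fderivWithin ℝ F S (0, t) ((1:ℝ), (0:ℝ)) with hVdef
  have hVcont : ContinuousOn V I := by
    have hc1 : ContinuousOn (fun t : ℝ => fderivWithin ℝ F S (0, t)) I := by
      apply hD1.continuousOn.comp
      · exact (continuous_const.prodMk continuous_id).continuousOn
      · exact fun t ht => (hmem 0 t).2 ht
    exact hc1.clm_apply continuousOn_const
  have hw : ∀ t ∈ I, u 0 t = 0 := by
    intro t₀ ht₀
    have hIccI : Icc (-1 : ℝ) t₀ ⊆ I := fun s hs => hIord h1I ht₀ hs.1 hs.2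
    obtain ⟨C, hC⟩ := isCompact_Icc.exists_bound_of_continuousOn
      ((continuousOn_const.add hVcont).mono hIccI : ContinuousOn (fun s => a + V s) _)
    have hwcont : ContinuousOn (fun t => u 0 t) (Icc (-1 : ℝ) t₀) := by
      have : ContinuousOn F S := hreg.continuousOn
      exact this.comp ((continuous_const.prodMk continuous_id).continuousOn)
        (fun s hs => (hmem 0 s).2 (hIccI hs))
    have key := norm_le_gronwallBound_of_norm_deriv_right_le (δ := 0) (K := C) (ε := 0)
      (f := fun t => u 0 t) (f' := fun t => -(a + V t) * u 0 t) (a := -1) (b := t₀)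
      hwcont ?_ (by simp [h0]) ?_
    · have := key t₀ ⟨ht₀.1, le_rfl⟩
      rw [gronwallBound_ε0_δ0] at this
      exact norm_le_zero_iff.1 this
    · intro s hs
      have hsI : s ∈ I := hIccI ⟨hs.1, hs.2.le⟩
      obtain ⟨ut, hut, heqn⟩ := heq 0 s hsI.1 hsI.2
      have hut' : ut = -(a + V s) * u 0 s := by
        rw [hderiv0 0 s hsI] at heqn
        rw [hVdef]
        linarith
      have h5 := hut.mono (Ici_subset_Ici.2 hs.1)
      rw [hut'] at h5
      exact h5
    · intro s hs
      have : ‖-(a + V s) * u 0 s‖ = |a + V s| * ‖u 0 s‖ := by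
        rw [norm_mul, norm_neg, Real.norm_eq_abs]
      rw [this, add_zero]
      exact mul_le_mul_of_nonneg_right (hC s ⟨hs.1, hs.2.le⟩) (norm_nonneg _)
  have hVode : ∀ t ∈ I, HasDerivWithinAt V (-a * V t - V t ^ 2) I t := by
    intro t ht
    have hp : ((0:ℝ), t) ∈ S := (hmem 0 t).2 ht
    set A := fderivWithin ℝ (fun q => fderivWithin ℝ F S q) S ((0:ℝ), t) with hAdef
    have hDt : HasDerivWithinAt (fun t' : ℝ => fderivWithin ℝ F S (0, t')) (A ((0:ℝ),(1:ℝ))) I t := by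
      have hg : HasDerivWithinAt (fun t' : ℝ => (((0:ℝ) : ℝ), t')) ((0:ℝ), (1:ℝ)) I t :=
        ((hasDerivAt_const t (0:ℝ)).prodMk (hasDerivAt_id t)).hasDerivWithinAt
      exact (hDd (0, t) hp).comp_hasDerivWithinAt t hg (fun s hs => (hmem 0 s).2 hs)
    have hVd : HasDerivWithinAt V ((A ((0:ℝ),(1:ℝ))) ((1:ℝ),(0:ℝ))) I t := by
      have := hDt.clm_apply (hasDerivWithinAt_const t I (((1:ℝ),(0:ℝ)) : ℝ × ℝ))
      simpa using this
    have hsymm : (A ((0:ℝ),(1:ℝ))) ((1:ℝ),(0:ℝ)) = (A ((1:ℝ),(0:ℝ))) ((0:ℝ),(1:ℝ)) := by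
      have hsym := (hreg ((0:ℝ), t) hp).isSymmSndFDerivWithinAt (by simp) hSu
        (hSclos ((0:ℝ), t) hp) hp
      exact hsym ((0:ℝ),(1:ℝ)) ((1:ℝ),(0:ℝ))
    have hF' : HasFDerivWithinAt F (fderivWithin ℝ F S ((0:ℝ), t)) S ((0:ℝ), t) := hD _ hp
    have hDh : HasFDerivWithinAt (fun q => fderivWithin ℝ F S q ((1:ℝ),(0:ℝ)))
        ((fderivWithin ℝ F S ((0:ℝ), t)).comp (0 : (ℝ×ℝ) →L[ℝ] (ℝ×ℝ)) + A.flip ((1:ℝ),(0:ℝ))) S ((0:ℝ), t) :=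
      (hDd _ hp).clm_apply (hasFDerivWithinAt_const _ _ _)
    have hmul : HasFDerivWithinAt (fun q => F q * fderivWithin ℝ F S q ((1:ℝ),(0:ℝ)))
        (F ((0:ℝ), t) • ((fderivWithin ℝ F S ((0:ℝ), t)).comp (0 : (ℝ×ℝ) →L[ℝ] (ℝ×ℝ)) + A.flip ((1:ℝ),(0:ℝ)))
          + fderivWithin ℝ F S ((0:ℝ), t) ((1:ℝ),(0:ℝ)) • fderivWithin ℝ F S ((0:ℝ), t)) S ((0:ℝ), t) :=
      hF'.mul hDh
    have hca : HasFDerivWithinAt (fun q => -a * F q) ((-a) • fderivWithin ℝ F S ((0:ℝ), t)) S ((0:ℝ), t) :=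
      hF'.const_mul (-a)
    have hΦ : HasFDerivWithinAt (fun q : ℝ × ℝ => fderivWithin ℝ F S q ((0:ℝ),(1:ℝ)))
        ((-a) • fderivWithin ℝ F S ((0:ℝ), t)
          - (F ((0:ℝ), t) • ((fderivWithin ℝ F S ((0:ℝ), t)).comp (0 : (ℝ×ℝ) →L[ℝ] (ℝ×ℝ)) + A.flip ((1:ℝ),(0:ℝ)))
          + fderivWithin ℝ F S ((0:ℝ), t) ((1:ℝ),(0:ℝ)) • fderivWithin ℝ F S ((0:ℝ), t))) S ((0:ℝ), t) := by
      apply (hca.sub hmul).congr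
      · intro q hq
        exact hG q.1 q.2 ((hmem q.1 q.2).1 hq)
      · exact hG 0 t ht
    have hΦ' : HasFDerivWithinAt (fun q : ℝ × ℝ => fderivWithin ℝ F S q ((0:ℝ),(1:ℝ)))
        ((fderivWithin ℝ F S ((0:ℝ), t)).comp (0 : (ℝ×ℝ) →L[ℝ] (ℝ×ℝ)) + A.flip ((0:ℝ),(1:ℝ))) S ((0:ℝ), t) :=
      (hDd _ hp).clm_apply (hasFDerivWithinAt_const _ _ _)
    have huniq := (hSu _ hp).eq hΦ' hΦ
    have hval := congrArg (fun L : (ℝ × ℝ) →L[ℝ] ℝ => L ((1:ℝ),(0:ℝ))) huniq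
    have hfp : F ((0:ℝ), t) = 0 := hw t ht
    simp only [ContinuousLinearMap.add_apply, ContinuousLinearMap.coe_comp',
      Function.comp_apply, ContinuousLinearMap.zero_apply, map_zero,
      ContinuousLinearMap.flip_apply, ContinuousLinearMap.sub_apply,
      ContinuousLinearMap.smul_apply, smul_eq_mul, hfp, zero_mul, zero_add, zero_smul] at hval
    have hfinal : (A ((0:ℝ),(1:ℝ))) ((1:ℝ),(0:ℝ)) = -a * V t - V t ^ 2 := by
      rw [hsymm, hval, hVdef]
      ring
    rw [← hfinal]
    exact hVd
  have hVinit : V (-1) = ψ (-1) := by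
    rw [hψ1]
    have h2 := hderiv0 0 (-1) h1I
    rw [h1] at h2
    exact h2.symm
  have hkey : ∀ t₀ ∈ I, t₀ < T₁ → V t₀ = ψ t₀ := by
    intro t₀ ht₀ hlt
    have hIccI : Icc (-1 : ℝ) t₀ ⊆ I := fun s hs => hIord h1I ht₀ hs.1 hs.2
    obtain ⟨C₁, hC₁⟩ := isCompact_Icc.exists_bound_of_continuousOn (hVcont.mono hIccI)
    have hψcont : ContinuousOn ψ (Icc (-1 : ℝ) t₀) := by
      rw [hψdef]
      apply ContinuousOn.div
      · fun_prop
      · fun_prop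
      · intro s hs h
        have := hsign s (lt_of_le_of_lt hs.2 hlt)
        rw [h] at this; simp at this
    obtain ⟨C₂, hC₂⟩ := isCompact_Icc.exists_bound_of_continuousOn hψcont
    set R : ℝ := max C₁ C₂ with hRdef
    have hR0 : 0 ≤ R :=
      le_trans (norm_nonneg (V (-1))) ((hC₁ (-1) ⟨le_rfl, ht₀.1⟩).trans (le_max_left _ _))
    set K : NNReal := Real.toNNReal (|a| + 2*R) with hKdef
    have hKc : (K : ℝ) = |a| + 2*R := Real.coe_toNNReal _ (by positivity)
    have hlip : ∀ s : ℝ, LipschitzOnWith K (fun y : ℝ => -a*y - y^2)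
        (Metric.closedBall (0:ℝ) R) := by
      intro s
      apply LipschitzOnWith.of_dist_le_mul
      intro x hx y hy
      rw [Real.dist_eq, Real.dist_eq]
      have hx' : |x| ≤ R := by simpa [Real.dist_eq] using hx
      have hy' : |y| ≤ R := by simpa [Real.dist_eq] using hy
      have he : (-a*x - x^2) - (-a*y - y^2) = (x - y) * (-(a + x + y)) := by ring
      rw [he, abs_mul, hKc, mul_comm (|a| + 2*R)]
      apply mul_le_mul_of_nonneg_left _ (abs_nonneg _)
      calc |(-(a + x + y))| = |a + x + y| := abs_neg _
        _ ≤ |a| + |x| + |y| := by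
            calc |a + x + y| ≤ |a + x| + |y| := abs_add_le _ _
              _ ≤ |a| + |x| + |y| := by linarith [abs_add_le a x]
        _ ≤ |a| + 2*R := by linarith
    have huniq := ODE_solution_unique_of_mem_Icc_right (v := fun _ y => -a*y - y^2)
      (s := fun _ => Metric.closedBall (0:ℝ) R) (a := -1) (b := t₀) (fun s _ => hlip s)
      (hVcont.mono hIccI) ?_ ?_ hψcont ?_ ?_ hVinit
    · exact huniq ⟨ht₀.1, le_rfl⟩
    · intro s hs
      have hsI : s ∈ I := hIccI ⟨hs.1, hs.2.le⟩
      apply (hVode s hsI).mono_of_mem_nhdsWithin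
      exact mem_of_superset (Icc_mem_nhdsGE_of_mem ⟨le_rfl, hs.2⟩)
        (fun z hz => hIord hsI ht₀ hz.1 hz.2)
    · intro s hs
      rw [Metric.mem_closedBall, Real.dist_eq, sub_zero]
      exact le_trans (hC₁ s ⟨hs.1, hs.2.le⟩) (le_max_left _ _)
    · intro s hs
      exact (hψd s (hs.2.trans hlt)).hasDerivWithinAt
    · intro s hs
      rw [Metric.mem_closedBall, Real.dist_eq, sub_zero]
      exact le_trans (hC₂ s ⟨hs.1, hs.2.le⟩) (le_max_right _ _)
  -- blow-up of ψ
  have hblow : Tendsto ψ (nhdsWithin T₁ (Iio T₁)) atBot := by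
    have hcont1 : Continuous fun t : ℝ => a * Real.exp (-a*(t+1)) := by fun_prop
    have hcont2 : Continuous fun t : ℝ => (1-a) - Real.exp (-a*(t+1)) := by fun_prop
    have hnum : Tendsto (fun t => a * Real.exp (-a*(t+1))) (nhdsWithin T₁ (Iio T₁))
        (nhds (a * (1-a))) := by
      have h5 : Tendsto (fun t => a * Real.exp (-a*(t+1))) (nhdsWithin T₁ (Iio T₁))
          (nhds (a * Real.exp (-a*(T₁+1)))) :=
        (hcont1.tendsto T₁).mono_left nhdsWithin_le_nhds
      rwa [hexpT₁] at h5
    have hden0 : Tendsto (fun t => (1-a) - Real.exp (-a*(t+1))) (nhdsWithin T₁ (Iio T₁))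
        (nhds 0) := by
      have h5 : Tendsto (fun t => (1-a) - Real.exp (-a*(t+1))) (nhdsWithin T₁ (Iio T₁))
          (nhds ((1-a) - Real.exp (-a*(T₁+1)))) :=
        (hcont2.tendsto T₁).mono_left nhdsWithin_le_nhds
      rwa [hexpT₁, sub_self] at h5
    have hψeq : ∀ t : ℝ, ψ t = (a * Real.exp (-a*(t+1))) * ((1-a) - Real.exp (-a*(t+1)))⁻¹ :=
      fun t => div_eq_mul_inv _ _
    rcases ha0.lt_or_gt with hneg | hpos
    · -- a < 0 : denominator positive, numerator limit negative
      have hinv : Tendsto (fun t => ((1-a) - Real.exp (-a*(t+1)))⁻¹) (nhdsWithin T₁ (Iio T₁))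
          atTop := by
        apply Filter.Tendsto.inv_tendsto_nhdsGT_zero
        rw [tendsto_nhdsWithin_iff]
        refine ⟨hden0, ?_⟩
        filter_upwards [self_mem_nhdsWithin] with s hs
        have := hsign s hs
        have : 0 < (1-a) - Real.exp (-a*(s+1)) := by nlinarith
        exact this
      have := Filter.Tendsto.neg_mul_atTop (by nlinarith : a * (1-a) < 0) hnum hinv
      exact this.congr (fun t => (hψeq t).symm)
    · -- a > 0 : denominator negative, numerator limit positive
      have hinv : Tendsto (fun t => (-(((1-a) - Real.exp (-a*(t+1)))))⁻¹) (nhdsWithin T₁ (Iio T₁))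
          atTop := by
        apply Filter.Tendsto.inv_tendsto_nhdsGT_zero
        rw [tendsto_nhdsWithin_iff]
        refine ⟨by simpa using hden0.neg, ?_⟩
        filter_upwards [self_mem_nhdsWithin] with s hs
        have := hsign s hs
        have : 0 < -((1-a) - Real.exp (-a*(s+1))) := by nlinarith
        exact this
      have hinv' : Tendsto (fun t => (((1-a) - Real.exp (-a*(t+1))))⁻¹) (nhdsWithin T₁ (Iio T₁))
          atBot := by
        have := tendsto_neg_atTop_atBot.comp hinv
        refine this.congr (fun t => ?_)
        show -((-(1 - a - Real.exp (-a*(t+1))))⁻¹) = _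
        rw [inv_neg, neg_neg]
      have := Filter.Tendsto.pos_mul_atBot (by nlinarith : 0 < a * (1-a)) hnum hinv'
      exact this.congr (fun t => (hψeq t).symm)
  -- T ≤ T₁
  have hTle : T ≤ ((T₁ : ℝ) : EReal) := by
    by_contra hc
    push_neg at hc
    have hT₁I : T₁ ∈ I := ⟨hT₁gt.le, hc⟩
    have hne : (nhdsWithin T₁ (Ico (-1) T₁)).NeBot := by
      rw [← mem_closure_iff_nhdsWithin_neBot, closure_Ico (by linarith : (-1:ℝ) ≠ T₁)]
      exact ⟨hT₁gt.le, le_rfl⟩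
    have hsub : Ico (-1 : ℝ) T₁ ⊆ I := fun s hs => hIord h1I hT₁I hs.1 hs.2.le
    have h₁ : Tendsto V (nhdsWithin T₁ (Ico (-1) T₁)) (nhds (V T₁)) :=
      (hVcont T₁ hT₁I).mono_left (nhdsWithin_mono _ hsub)
    have h₂ : Tendsto V (nhdsWithin T₁ (Ico (-1) T₁)) atBot := by
      apply (hblow.mono_left (nhdsWithin_mono _ (fun s hs => hs.2))).congr'
      filter_upwards [self_mem_nhdsWithin] with s hs
      exact (hkey s (hsub hs) hs.2).symm
    exact not_tendsto_atBot_of_tendsto_nhds h₁ h₂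
  refine ⟨?_, hTle, ?_, ?_, ?_⟩
  · intro t htm htT
    have htI : t ∈ I := ⟨htm, htT⟩
    have htT₁ : t < T₁ := by
      have := lt_of_lt_of_le htT hTle
      exact_mod_cast this
    refine ⟨hw t htI, ?_⟩
    rw [hderiv0 0 t htI]
    exact hkey t htI htT₁
  · intro hpos
    have h2 : 0 < (1/a) * (-a - Real.log (1 - a)) :=
      mul_pos (by positivity) (by linarith)
    have h3 : (1/a) * a = 1 := by field_simp
    rw [hT₁def]
    linarith [h2, h3]
  · intro hneg
    have h2 : 0 < (-(1/a)) * (-a - Real.log (1 - a)) := by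
      apply mul_pos
      · rw [neg_pos]; exact one_div_neg.2 hneg
      · linarith
    have h3 : (1/a) * a = 1 := by field_simp
    rw [hT₁def]
    linarith [h2, h3]
  · intro hTT₁
    apply hblow.congr'
    have hmemIco : Ico (-1 : ℝ) T₁ ∈ nhdsWithin T₁ (Iio T₁) :=
      Ico_mem_nhdsLT_of_mem ⟨hT₁gt, le_rfl⟩
    filter_upwards [hmemIco] with s hs
    have hsI : s ∈ I := ⟨hs.1, by rw [hTT₁]; exact_mod_cast hs.2⟩
    rw [hderiv0 0 s hsI]
    exact (hkey s hsI hs.2).symm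
end

section
/- Let a ≥ 1 and define w : [-1, ∞) → ℝ by w(t) = a e^{-a(t+1)} / ((1 - a) - e^{-a(t+1)}). Then the denominator (1 - a) - e^{-a(t+1)} never vanishes for t ≥ -1, w is C¹ and satisfies the Riccati equation w'(t) = -w(t)² - a w(t) with w(-1) = -1, and -1 ≤ w(t) < 0 for all t ≥ -1 (for a = 1, w ≡ -1; for a > 1, w(t) → 0 as t → ∞). Hence for a ≥ 1 the slope of the damped Burgers solution along the critical characteristic never blows up. -/
open Set Filter

/-- For `a ≥ 1` the slope `w(t) = a e^{-a(t+1)}/((1-a) - e^{-a(t+1)})` along the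
critical characteristic of the damped Burgers equation is globally defined on
`[-1, ∞)`, solves the Riccati equation `w' = -w² - aw` with `w(-1) = -1`, satisfies
`-1 ≤ w(t) < 0`, is identically `-1` if `a = 1`, and tends to `0` if `a > 1`. -/
theorem damped_burgers_no_blowup_slope
    (a : ℝ) (ha : 1 ≤ a) (w : ℝ → ℝ)
    (hw : ∀ t : ℝ, w t =
      a * Real.exp (-a * (t + 1)) / ((1 - a) - Real.exp (-a * (t + 1)))) :
    (∀ t : ℝ, -1 ≤ t → (1 - a) - Real.exp (-a * (t + 1)) ≠ 0) ∧
    w (-1) = -1 ∧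
    ContDiffOn ℝ 1 w (Ici (-1)) ∧
    (∀ t : ℝ, -1 ≤ t → HasDerivAt w (-w t ^ 2 - a * w t) t) ∧
    (∀ t : ℝ, -1 ≤ t → -1 ≤ w t ∧ w t < 0) ∧
    (a = 1 → ∀ t : ℝ, -1 ≤ t → w t = -1) ∧
    (1 < a → Tendsto w atTop (nhds 0)) := by
  have ha0 : (0:ℝ) < a := lt_of_lt_of_le one_pos ha
  have hD : ∀ t : ℝ, (1 - a) - Real.exp (-a * (t + 1)) < 0 := by
    intro t
    have := Real.exp_pos (-a * (t + 1))
    linarith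
  have hDne : ∀ t : ℝ, (1 - a) - Real.exp (-a * (t + 1)) ≠ 0 := fun t => (hD t).ne
  have hE : ∀ t : ℝ, HasDerivAt (fun t => Real.exp (-a * (t + 1)))
      (-a * Real.exp (-a * (t + 1))) t := by
    intro t
    have h1 : HasDerivAt (fun t : ℝ => -a * (t + 1)) (-a) t := by
      simpa using ((hasDerivAt_id t).add_const 1).const_mul (-a)
    simpa [mul_comm] using h1.exp
  refine ⟨fun t _ => hDne t, ?_, ?_, ?_, ?_, ?_, ?_⟩
  · rw [hw]
    norm_num [Real.exp_zero]
    field_simp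
  · have hc : ContDiff ℝ 1 (fun t : ℝ =>
        a * Real.exp (-a * (t + 1)) / ((1 - a) - Real.exp (-a * (t + 1)))) := by
      apply ContDiff.div
      · fun_prop
      · fun_prop
      · exact fun t => hDne t
    have : w = fun t : ℝ =>
        a * Real.exp (-a * (t + 1)) / ((1 - a) - Real.exp (-a * (t + 1))) := funext hw
    rw [this]
    exact hc.contDiffOn
  · intro t ht
    have hN : HasDerivAt (fun t : ℝ => a * Real.exp (-a * (t + 1)))
        (a * (-a * Real.exp (-a * (t + 1)))) t := (hE t).const_mul a
    have hDd : HasDerivAt (fun t : ℝ => (1 - a) - Real.exp (-a * (t + 1)))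
        (0 - (-a * Real.exp (-a * (t + 1)))) t := (hasDerivAt_const t (1 - a)).sub (hE t)
    have hdiv := hN.fun_div hDd (hDne t)
    have hwfun : w = fun t : ℝ =>
        a * Real.exp (-a * (t + 1)) / ((1 - a) - Real.exp (-a * (t + 1))) := funext hw
    rw [hwfun]
    refine hdiv.congr_deriv ?_
    beta_reduce
    have hd : (1 - a) - Real.exp (-a * (t + 1)) ≠ 0 := hDne t
    have hEpos : Real.exp (-a * (t + 1)) ≠ 0 := (Real.exp_pos _).ne'
    set E := Real.exp (-a * (t + 1)) with hEdef
    field_simp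
    ring
  · intro t ht
    have hE1 : Real.exp (-a * (t + 1)) ≤ 1 := by
      rw [Real.exp_le_one_iff]
      nlinarith
    have hEpos := Real.exp_pos (-a * (t + 1))
    constructor
    · rw [hw, le_div_iff_of_neg (hD t)]
      nlinarith
    · rw [hw]
      exact div_neg_of_pos_of_neg (by positivity) (hD t)
  · intro h1 t ht
    subst h1
    rw [hw]
    have hEpos := (Real.exp_pos (-(1:ℝ) * (t + 1))).ne'
    rw [show ((1:ℝ) - 1) = 0 by ring, zero_sub, one_mul, div_neg, div_self hEpos]
  · intro h1
    have hE0 : Tendsto (fun t : ℝ => Real.exp (-a * (t + 1))) atTop (nhds 0) := by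
      apply Real.tendsto_exp_atBot.comp
      have hbase : Tendsto (fun t : ℝ => t + 1) atTop atTop :=
        tendsto_atTop_add_const_right _ 1 tendsto_id
      exact Tendsto.neg_mul_atTop (by linarith : -a < 0) tendsto_const_nhds hbase
    have hlim : Tendsto (fun t : ℝ =>
        a * Real.exp (-a * (t + 1)) / ((1 - a) - Real.exp (-a * (t + 1)))) atTop
        (nhds (a * 0 / ((1 - a) - 0))) := by
      apply Tendsto.div (tendsto_const_nhds.mul hE0) (tendsto_const_nhds.sub hE0)
      intro h
      rw [sub_zero] at h
      linarith
    have : w = fun t : ℝ =>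
        a * Real.exp (-a * (t + 1)) / ((1 - a) - Real.exp (-a * (t + 1))) := funext hw
    rw [this]
    simpa using hlim
end

section
/- Let ε > 0 and let τ(t) = t + ε e^{b(t+ε)} + (1/b)(1 - e^{b(t+ε)}) for b ≠ 0 (the solution of τ̇ = b(τ - t), τ(-ε) = 0). Then: (i) if b > 0 and εb ≥ 2, then τ(t) > t for all t ≥ -ε (no degeneration: the damping prevents shock formation); (ii) if εb ≤ 1/2 (in particular for any b < 0, or b > 0 with εb ≤ 1/2), then there is a unique T★ ≥ -ε with τ(T★) = T★, namely T★ = -(1/b) ln(1 - εb) - ε, and τ(t) > t for all t ∈ [-ε, T★). -/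
open Set

/-- Degeneration of the self-similar change of variables for
`τ(t) = t + ε e^{b(t+ε)} + (1/b)(1 - e^{b(t+ε)})`:
(i) if `b > 0` and `εb ≥ 2` then `τ(t) > t` for all `t ≥ -ε` (no shock);
(ii) if `εb ≤ 1/2` then there is a unique `T★ ≥ -ε` with `τ(T★) = T★`, namely
`T★ = -(1/b) ln(1 - εb) - ε`, and `τ(t) > t` on `[-ε, T★)`. -/
theorem modulation_ode_degeneration
    (b ε : ℝ) (hb : b ≠ 0) (hε : 0 < ε)
    (τ : ℝ → ℝ)
    (hτ : ∀ t : ℝ, τ t = t + ε * Real.exp (b * (t + ε))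
      + (1 / b) * (1 - Real.exp (b * (t + ε)))) :
    (0 < b → 2 ≤ ε * b → ∀ t : ℝ, -ε ≤ t → t < τ t) ∧
    (ε * b ≤ 1 / 2 →
      -ε ≤ -(1 / b) * Real.log (1 - ε * b) - ε ∧
      τ (-(1 / b) * Real.log (1 - ε * b) - ε)
        = -(1 / b) * Real.log (1 - ε * b) - ε ∧
      (∀ t : ℝ, -ε ≤ t → τ t = t → t = -(1 / b) * Real.log (1 - ε * b) - ε) ∧
      (∀ t : ℝ, -ε ≤ t → t < -(1 / b) * Real.log (1 - ε * b) - ε → t < τ t)) := by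
  have key : ∀ t : ℝ, τ t - t = (Real.exp (b * (t + ε)) * (ε * b - 1) + 1) / b := by
    intro t; rw [hτ t]; field_simp; ring
  constructor
  · intro hb0 h2 t ht
    have hE : 1 ≤ Real.exp (b * (t + ε)) := by
      rw [← Real.exp_zero]; exact Real.exp_le_exp.mpr (by nlinarith)
    have hk := key t
    have : 0 < (Real.exp (b * (t + ε)) * (ε * b - 1) + 1) / b := by
      apply div_pos _ hb0
      nlinarith
    linarith
  · intro hhalf
    have h1 : 0 < 1 - ε * b := by nlinarith
    set T : ℝ := -(1 / b) * Real.log (1 - ε * b) - ε with hTdef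
    have hbT : b * (T + ε) = -Real.log (1 - ε * b) := by
      rw [hTdef]; field_simp; ring
    have hExpT : Real.exp (b * (T + ε)) = 1 / (1 - ε * b) := by
      rw [hbT, Real.exp_neg, Real.exp_log h1, one_div]
    have hτT : τ T = T := by
      have hk := key T
      rw [hExpT] at hk
      have : (1 / (1 - ε * b) * (ε * b - 1) + 1) = 0 := by
        field_simp; ring
      rw [this] at hk
      simp at hk
      linarith
    have hTge : -ε ≤ T := by
      rw [hTdef]
      have : 0 ≤ -(1 / b) * Real.log (1 - ε * b) := by
        rcases lt_or_gt_of_ne hb with hbneg | hbpos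
        · have hlog : 0 ≤ Real.log (1 - ε * b) :=
            Real.log_nonneg (by nlinarith)
          have hbi : 0 ≤ -(1 / b) := by
            have : 1 / b < 0 := div_neg_of_pos_of_neg one_pos hbneg
            linarith
          exact mul_nonneg hbi hlog
        · have hlog : Real.log (1 - ε * b) ≤ 0 :=
            Real.log_nonpos (by linarith) (by nlinarith)
          have hbi : -(1 / b) ≤ 0 := by
            have : 0 < 1 / b := by positivity
            linarith
          nlinarith [mul_nonneg (neg_nonneg.mpr hbi) (neg_nonneg.mpr hlog)]
      linarith
    refine ⟨hTge, hτT, ?_, ?_⟩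
    · intro t ht hfix
      have hk := key t
      rw [hfix] at hk
      have hnum : Real.exp (b * (t + ε)) * (ε * b - 1) + 1 = 0 := by
        field_simp at hk
        linarith [hk]
      have hE : Real.exp (b * (t + ε)) = 1 / (1 - ε * b) := by
        rw [eq_div_iff h1.ne']
        nlinarith
      have : b * (t + ε) = b * (T + ε) := by
        exact Real.exp_injective (hE.trans hExpT.symm)
      have : t + ε = T + ε := mul_left_cancel₀ hb this
      linarith
    · intro t ht hlt
      have hk := key t
      have hlt' : b * (t + ε) ≠ b * (T + ε) := fun h => by
        have : t + ε = T + ε := mul_left_cancel₀ hb h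
        linarith
      rcases lt_or_gt_of_ne hb with hbneg | hbpos
      · have hmono : Real.exp (b * (T + ε)) < Real.exp (b * (t + ε)) := by
          apply Real.exp_lt_exp.mpr; nlinarith
        rw [hExpT] at hmono
        have hnum : Real.exp (b * (t + ε)) * (ε * b - 1) + 1 < 0 := by
          have : 1 < Real.exp (b * (t + ε)) * (1 - ε * b) := by
            rw [div_lt_iff₀ h1] at hmono; linarith
          nlinarith
        have : 0 < (Real.exp (b * (t + ε)) * (ε * b - 1) + 1) / b :=
          div_pos_of_neg_of_neg hnum hbneg
        linarith
      · have hmono : Real.exp (b * (t + ε)) < Real.exp (b * (T + ε)) := by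
          apply Real.exp_lt_exp.mpr; nlinarith
        rw [hExpT] at hmono
        have hnum : 0 < Real.exp (b * (t + ε)) * (ε * b - 1) + 1 := by
          have : Real.exp (b * (t + ε)) * (1 - ε * b) < 1 := by
            rw [lt_div_iff₀ h1] at hmono; linarith
          nlinarith
        have : 0 < (Real.exp (b * (t + ε)) * (ε * b - 1) + 1) / b :=
          div_pos hnum hbpos
        linarith
end

section
/- Let η(y) = 1 + y₁² + (y₂² + y₃²)³ for y ∈ ℝ³, and let -1/2 ≤ α ≤ 0 ≤ β with α + β > 0. Then there is a constant C = C(α, β), independent of s★ and s₀, such that for every s₀ ≥ 0, every s★ ∈ ℝ, and every continuous Φ : [s₀, ∞) → ℝ³ satisfying |Φ₁(s)| ≥ min{ e^{s/2}, |e^{s/2} - e^{s★/2}| } for all s ≥ s₀, one has ∫_{s₀}^{∞} e^{-αs} η(Φ(s))^{-β} ds ≤ C. -/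
open Set MeasureTheory

set_option maxHeartbeats 1000000






lemma expInt {k : ℝ} (hk : 0 < k) (c : ℝ) :
    IntegrableOn (fun s : ℝ => Real.exp (-(k * s))) (Ioi c) ∧
    ∫ s in Ioi c, Real.exp (-(k * s)) = Real.exp (-(k * c)) / k := by
  have hint : IntegrableOn (fun s : ℝ => Real.exp (-(k * s))) (Ioi c) := by
    simpa [neg_mul] using exp_neg_integrableOn_Ioi c hk
  refine ⟨hint, ?_⟩
  have hderiv : ∀ x ∈ Ici c, HasDerivAt (fun s : ℝ => -Real.exp (-(k * s)) / k)
      (Real.exp (-(k * x))) x := by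
    intro x _
    have h1 : HasDerivAt (fun s : ℝ => -(k * s)) (-k) x := by
      have h := ((hasDerivAt_id x).const_mul k).neg; simp only [mul_one] at h; exact h
    have h2 := (h1.exp).neg.div_const k
    convert h2 using 1
    · rfl
    · rfl
    · rfl
    · field_simp
  have htend : Filter.Tendsto (fun s : ℝ => -Real.exp (-(k * s)) / k) Filter.atTop (nhds 0) := by
    have h3 : Filter.Tendsto (fun s : ℝ => -(k * s)) Filter.atTop Filter.atBot := by
      simpa using Filter.tendsto_neg_atBot_iff.mpr (Filter.tendsto_id.const_mul_atTop hk)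
    have h4 : Filter.Tendsto (fun s : ℝ => Real.exp (-(k * s))) Filter.atTop (nhds 0) :=
      Real.tendsto_exp_atBot.comp h3
    simpa using (h4.neg).div_const k
  have := integral_Ioi_of_hasDerivAt_of_tendsto' hderiv hint htend
  rw [this]
  ring

lemma absExpLB {x : ℝ} (h : |x| ≤ 1) : |x| / Real.exp 1 ≤ |Real.exp x - 1| := by
  have he1 : (1:ℝ) ≤ Real.exp 1 := by linarith [Real.add_one_le_exp (1:ℝ)]
  rcases le_or_gt 0 x with hx | hx
  · have h1 : x + 1 ≤ Real.exp x := Real.add_one_le_exp x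
    have h2 : 0 ≤ Real.exp x - 1 := by linarith
    rw [abs_of_nonneg hx, abs_of_nonneg h2]
    have : x / Real.exp 1 ≤ x := by
      rw [div_le_iff₀ (by linarith)]; nlinarith
    linarith
  · have hx1 : -1 ≤ x := by
      have := abs_le.mp h; exact this.1
    have h2 : Real.exp x < 1 := by
      rw [← Real.exp_zero]; exact Real.exp_lt_exp.mpr hx
    rw [abs_of_neg hx, abs_of_neg (by linarith : Real.exp x - 1 < 0)]
    -- goal: -x / exp 1 ≤ -(exp x - 1) = 1 - exp x
    -- 1 - exp x = exp x * (exp (-x) - 1) ≥ exp x * (-x) ≥ exp (-1) * (-x) = (-x)/exp 1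
    have key : Real.exp x * (-x) ≤ 1 - Real.exp x := by
      have h3 : (-x) + 1 ≤ Real.exp (-x) := Real.add_one_le_exp (-x)
      have h4 : Real.exp x * ((-x) + 1) ≤ Real.exp x * Real.exp (-x) :=
        mul_le_mul_of_nonneg_left h3 (Real.exp_nonneg x)
      rw [← Real.exp_add] at h4
      simp at h4
      nlinarith [Real.exp_pos x]
    have h5 : Real.exp (-1) * (-x) ≤ Real.exp x * (-x) :=
      mul_le_mul_of_nonneg_right (Real.exp_le_exp.mpr hx1) (by linarith)
    have h6 : Real.exp (-1) = (Real.exp 1)⁻¹ := Real.exp_neg 1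
    rw [div_eq_mul_inv, ← h6]
    linarith [h5, key]

lemma sqRpowNeg {x : ℝ} (hx : 0 ≤ x) (b : ℝ) : (x ^ 2 : ℝ) ^ (-b) = x ^ (-(2*b)) := by
  rw [← Real.rpow_natCast x 2, ← Real.rpow_mul hx]
  norm_num

lemma hwLemma {sstar s : ℝ} (h1 : sstar - 2 < s) (h2 : s < sstar + 2) :
    Real.exp (sstar/2) / (2 * Real.exp 1) * |s - sstar|
      ≤ min (Real.exp (s/2)) |Real.exp (s/2) - Real.exp (sstar/2)| := by
  have he1 : (2:ℝ) ≤ Real.exp 1 := by linarith [Real.add_one_le_exp (1:ℝ)]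
  have he1pos : (0:ℝ) < Real.exp 1 := by linarith
  have hu : (0:ℝ) < Real.exp (sstar/2) := Real.exp_pos _
  set u := Real.exp (sstar/2) with hu_def
  set t := s - sstar with ht_def
  have habs_t : |t| ≤ 2 := by
    rw [abs_le]; constructor <;> [linarith; linarith]
  have hx : |t/2| ≤ 1 := by
    rw [abs_div, abs_two]; linarith
  refine le_min ?_ ?_
  · -- u/(2e) * |t| ≤ exp (s/2)
    have h3 : u / (2 * Real.exp 1) * |t| ≤ u / (2 * Real.exp 1) * 2 :=
      mul_le_mul_of_nonneg_left habs_t (by positivity)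
    have h4 : u / (2 * Real.exp 1) * 2 = Real.exp (sstar/2 - 1) := by
      rw [Real.exp_sub]
      rw [hu_def]
      field_simp
    have h5 : Real.exp (sstar/2 - 1) ≤ Real.exp (s/2) :=
      Real.exp_le_exp.mpr (by linarith)
    linarith
  · -- u/(2e) * |t| ≤ |exp (s/2) - u|
    have hsplit : Real.exp (s/2) = u * Real.exp (t/2) := by
      rw [hu_def, ← Real.exp_add]
      congr 1
      rw [ht_def]; ring
    have h6 : |Real.exp (s/2) - u| = u * |Real.exp (t/2) - 1| := by
      rw [hsplit]
      rw [show u * Real.exp (t/2) - u = u * (Real.exp (t/2) - 1) by ring]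
      rw [abs_mul, abs_of_pos hu]
    have h7 := absExpLB hx
    have h8 : u * (|t/2| / Real.exp 1) ≤ u * |Real.exp (t/2) - 1| :=
      mul_le_mul_of_nonneg_left h7 hu.le
    rw [h6]
    refine le_trans (le_of_eq ?_) h8
    rw [abs_div, abs_two]
    field_simp

lemma midInt {G : ℝ → ℝ} (hGeven : ∀ t, G (-t) = G t) (hG0 : ∀ t, 0 ≤ G t)
    (hGI : IntervalIntegrable G volume 0 2) (c s₀ M : ℝ) (hM : 0 ≤ M) :
    IntegrableOn ((Icc (c - 2) (c + 2)).indicator (fun s => M * G (s - c))) (Ioi s₀) ∧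
    ∫ s in Ioi s₀, (Icc (c - 2) (c + 2)).indicator (fun s => M * G (s - c)) s
      ≤ M * (2 * ∫ t in (0:ℝ)..2, G t) := by
  -- interval integrability of G on [-2,0]
  have hGI' : IntervalIntegrable G volume (-2) 0 := by
    have h2 : IntervalIntegrable (fun x => G (-x)) volume (-0) (-2) :=
      (IntervalIntegrable.iff_comp_neg (f := G)).mp hGI
    have h3 : IntervalIntegrable G volume (-0) (-2) := by
      simpa only [hGeven] using h2
    simpa using h3.symm
  have hGI2 : IntervalIntegrable G volume (-2) 2 := hGI'.trans hGI
  -- interval integrability of the shifted function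
  have hF : IntervalIntegrable (fun s => M * G (s - c)) volume (c - 2) (c + 2) := by
    have := (hGI2.comp_sub_right c).const_mul M
    simpa [add_comm, sub_eq_add_neg] using this
  have hc2 : c - 2 ≤ c + 2 := by linarith
  have hFOn : IntegrableOn (fun s => M * G (s - c)) (Icc (c - 2) (c + 2)) :=
    (intervalIntegrable_iff_integrableOn_Icc_of_le hc2).mp hF
  have hind : Integrable ((Icc (c - 2) (c + 2)).indicator (fun s => M * G (s - c))) :=
    hFOn.integrable_indicator measurableSet_Icc
  refine ⟨hind.integrableOn, ?_⟩
  have h0le : 0 ≤ᵐ[volume] (Icc (c - 2) (c + 2)).indicator (fun s => M * G (s - c)) := by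
    refine Filter.Eventually.of_forall fun s => ?_
    exact Set.indicator_nonneg (fun x _ => mul_nonneg hM (hG0 _)) s
  have step1 : ∫ s in Ioi s₀, (Icc (c - 2) (c + 2)).indicator (fun s => M * G (s - c)) s
      ≤ ∫ s, (Icc (c - 2) (c + 2)).indicator (fun s => M * G (s - c)) s :=
    integral_mono_measure Measure.restrict_le_self h0le hind
  have step2 : ∫ s, (Icc (c - 2) (c + 2)).indicator (fun s => M * G (s - c)) s
      = ∫ s in Icc (c - 2) (c + 2), M * G (s - c) := integral_indicator measurableSet_Icc
  have step3 : ∫ s in Icc (c - 2) (c + 2), M * G (s - c)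
      = ∫ s in (c-2)..(c+2), M * G (s - c) := by
    rw [integral_Icc_eq_integral_Ioc, intervalIntegral.integral_of_le hc2]
  have step4 : ∫ s in (c-2)..(c+2), M * G (s - c) = M * ∫ t in (-2:ℝ)..2, G t := by
    rw [intervalIntegral.integral_const_mul]
    congr 1
    have := intervalIntegral.integral_comp_sub_right (a := c - 2) (b := c + 2) G c
    simpa using this
  have step5 : ∫ t in (-2:ℝ)..2, G t = 2 * ∫ t in (0:ℝ)..2, G t := by
    have hadd := intervalIntegral.integral_add_adjacent_intervals hGI' hGI
    have hrefl : ∫ t in (-2:ℝ)..0, G t = ∫ t in (0:ℝ)..2, G t := by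
      have := intervalIntegral.integral_comp_neg (a := (0:ℝ)) (b := 2) G
      simp only [hGeven, neg_zero] at this
      simpa using this.symm
    rw [← hadd, hrefl]; ring
  rw [step2, step3, step4, step5] at step1
  exact step1

lemma midPack {G : ℝ → ℝ} (hGeven : ∀ t, G (-t) = G t) (hG0 : ∀ t, 0 ≤ G t)
    (hGI : IntervalIntegrable G volume 0 2) (sstar s₀ M c₃ I : ℝ) (hM : 0 ≤ M)
    (hc₃ : 0 ≤ c₃) (hI : (∫ t in (0:ℝ)..2, G t) ≤ I)
    (hMI : s₀ < sstar + 2 → M * (2 * I) ≤ c₃) :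
    IntegrableOn ((Icc (sstar - 2) (sstar + 2)).indicator (fun s => M * G (s - sstar))) (Ioi s₀) ∧
    (∫ s in Ioi s₀, (Icc (sstar - 2) (sstar + 2)).indicator (fun s => M * G (s - sstar)) s) ≤ c₃ := by
  obtain ⟨hint, hbd⟩ := midInt hGeven hG0 hGI sstar s₀ M hM
  refine ⟨hint, ?_⟩
  rcases lt_or_ge s₀ (sstar + 2) with hlt | hge
  · refine hbd.trans (le_trans ?_ (hMI hlt))
    have h2 : 2 * ∫ t in (0:ℝ)..2, G t ≤ 2 * I := by linarith
    exact mul_le_mul_of_nonneg_left h2 hM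
  · have hzero : EqOn ((Icc (sstar - 2) (sstar + 2)).indicator (fun s => M * G (s - sstar)))
        (fun _ => (0:ℝ)) (Ioi s₀) := by
      intro s hs
      have : s ∉ Icc (sstar - 2) (sstar + 2) := by
        intro hmem
        have h1 := hmem.2
        have h2 : s₀ < s := hs
        linarith
      simp [Set.indicator_of_notMem this]
    rw [setIntegral_congr_fun measurableSet_Ioi hzero]
    simpa using hc₃

lemma midCase (α b : ℝ) (hα : -(1/2) ≤ α) (hα0 : α ≤ 0) (hb0 : 0 ≤ b) (hb1 : b ≤ 1)
    (hab : 0 < α + b) (hcase : 2*b < 1 ∨ 1 < 2*b) :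
    ∃ c₃ : ℝ, ∀ s₀ : ℝ, 0 ≤ s₀ → ∀ sstar : ℝ, ∃ h₃ : ℝ → ℝ,
      (∀ s, 0 ≤ h₃ s) ∧ IntegrableOn h₃ (Ioi s₀) ∧ ((∫ s in Ioi s₀, h₃ s) ≤ c₃) ∧
      ∀ s : ℝ, s ≠ sstar → sstar - 2 < s → s < sstar + 2 →
        Real.exp (-α*s) *
          (1 + (min (Real.exp (s/2)) |Real.exp (s/2) - Real.exp (sstar/2)|)^2)^(-b) ≤ h₃ s := by
  have he1 : (2:ℝ) ≤ Real.exp 1 := by linarith [Real.add_one_le_exp (1:ℝ)]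
  have he1pos : (0:ℝ) < Real.exp 1 := by linarith
  rcases hcase with hp | hp
  · -- case (ii) : p = 2b < 1
    set p := 2*b with hp_def
    refine ⟨8 * Real.exp 1 ^ 2 / (1 - p), fun s₀ hs₀ sstar => ?_⟩
    have hu : (0:ℝ) < Real.exp (sstar/2) := Real.exp_pos _
    set u := Real.exp (sstar/2) with hu_def
    set a := u / (2 * Real.exp 1) with ha_def
    have ha : 0 < a := by positivity
    set G := fun t : ℝ => |t| ^ (-p) with hG_def
    set M := Real.exp (-α*(sstar+2)) * a ^ (-p) with hM_def
    have hM : 0 ≤ M := by positivity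
    have hGeven : ∀ t, G (-t) = G t := by intro t; simp [hG_def, abs_neg]
    have hG0 : ∀ t, 0 ≤ G t := fun t => Real.rpow_nonneg (abs_nonneg t) _
    have hGI : IntervalIntegrable G volume 0 2 := by
      have hbase : IntervalIntegrable (fun x : ℝ => x ^ (-p)) volume 0 2 :=
        intervalIntegral.intervalIntegrable_rpow' (by simp only [hp_def]; linarith)
      rw [intervalIntegrable_iff_integrableOn_Ioc_of_le (by norm_num : (0:ℝ) ≤ 2)] at hbase ⊢
      refine hbase.congr_fun ?_ measurableSet_Ioc
      intro x hx
      simp only [hG_def]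
      rw [abs_of_pos hx.1]
    -- integral bound for G on [0,2]
    have hIval : (∫ t in (0:ℝ)..2, G t) ≤ 2 / (1 - p) := by
      have hcong : ∫ t in (0:ℝ)..2, G t = ∫ t in (0:ℝ)..2, t ^ (-p) := by
        refine intervalIntegral.integral_congr ?_
        intro x hx
        rw [uIcc_of_le (by norm_num : (0:ℝ) ≤ 2)] at hx
        simp only [hG_def]
        rw [abs_of_nonneg hx.1]
      rw [hcong, integral_rpow (Or.inl (by simp only [hp_def]; linarith))]
      have h0 : (0:ℝ) ^ (-p + 1) = 0 := Real.zero_rpow (by simp only [hp_def]; intro h; linarith [h])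
      rw [h0]
      have h2 : (2:ℝ) ^ (-p + 1) ≤ 2 := by
        have := Real.rpow_le_rpow_of_exponent_le (one_le_two) (by simp only [hp_def]; linarith : -p + 1 ≤ 1)
        rwa [Real.rpow_one] at this
      have hden : 0 < -p + 1 := by simp only [hp_def]; linarith
      rw [sub_zero]
      rw [div_le_div_iff₀ hden (by simp only [hp_def]; linarith : (0:ℝ) < 1 - p)]
      nlinarith
    have hc₃0 : (0:ℝ) ≤ 8 * Real.exp 1 ^ 2 / (1 - p) := by
      apply div_nonneg (by positivity); simp only [hp_def]; linarith
    have hMI : s₀ < sstar + 2 → M * (2 * (2 / (1 - p))) ≤ 8 * Real.exp 1 ^ 2 / (1 - p) := by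
      intro hlt
      have hsstar : -2 ≤ sstar := by linarith
      -- M = exp(-α*(sstar+2)) * a^(-p) ≤ 2 * e1^2
      have hap : a ^ (-p) = Real.exp (sstar/2 * (-p)) * (2 * Real.exp 1) ^ p := by
        rw [ha_def, Real.div_rpow hu.le (by positivity), Real.exp_mul]
        rw [Real.rpow_neg (by positivity : (0:ℝ) ≤ 2 * Real.exp 1)]
        rw [div_eq_mul_inv, inv_inv]
      have hM_eq : M = Real.exp (-α*(sstar+2) + sstar/2 * (-p)) * (2 * Real.exp 1) ^ p := by
        rw [hM_def, hap, Real.exp_add]; ring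
      have hexp_le : Real.exp (-α*(sstar+2) + sstar/2 * (-p)) ≤ Real.exp 1 := by
        rw [show (Real.exp 1 : ℝ) = Real.exp 1 from rfl]
        apply Real.exp_le_exp.mpr
        have hfact : 0 ≤ (α + b) * (sstar + 2) := mul_nonneg hab.le (by linarith)
        simp only [hp_def]
        nlinarith
      have h2e : (2 * Real.exp 1) ^ p ≤ 2 * Real.exp 1 := by
        have := Real.rpow_le_rpow_of_exponent_le (by linarith : (1:ℝ) ≤ 2 * Real.exp 1)
          (by simp only [hp_def]; linarith : p ≤ 1)
        rwa [Real.rpow_one] at this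
      have hM_le : M ≤ 2 * Real.exp 1 ^ 2 := by
        rw [hM_eq]
        have h1 : (0:ℝ) ≤ (2 * Real.exp 1) ^ p := Real.rpow_nonneg (by positivity) _
        calc Real.exp (-α*(sstar+2) + sstar/2 * (-p)) * (2 * Real.exp 1) ^ p
            ≤ Real.exp 1 * (2 * Real.exp 1) := by
              exact mul_le_mul hexp_le h2e h1 (Real.exp_nonneg 1)
          _ = 2 * Real.exp 1 ^ 2 := by ring
      have hpos : (0:ℝ) ≤ 2 * (2 / (1 - p)) := by
        apply mul_nonneg (by norm_num)
        apply div_nonneg (by norm_num); simp only [hp_def]; linarith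
      calc M * (2 * (2 / (1 - p))) ≤ (2 * Real.exp 1 ^ 2) * (2 * (2 / (1 - p))) :=
            mul_le_mul_of_nonneg_right hM_le hpos
        _ = 8 * Real.exp 1 ^ 2 / (1 - p) := by
            field_simp
            ring
    obtain ⟨hint, hbd⟩ := midPack hGeven hG0 hGI sstar s₀ M (8 * Real.exp 1 ^ 2 / (1 - p))
      (2 / (1 - p)) hM hc₃0 hIval hMI
    refine ⟨_, ?_, hint, hbd, ?_⟩
    · intro s
      exact Set.indicator_nonneg (fun x _ => mul_nonneg hM (hG0 _)) s
    · -- pointwise bound in the middle region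
      intro s hne hr1 hr2
      have hmem : s ∈ Icc (sstar - 2) (sstar + 2) := ⟨hr1.le, hr2.le⟩
      rw [Set.indicator_of_mem hmem]
      set m := min (Real.exp (s/2)) |Real.exp (s/2) - u| with hm_def
      have hm0 : 0 ≤ m := le_min (Real.exp_pos _).le (abs_nonneg _)
      have hw : a * |s - sstar| ≤ m := hwLemma hr1 hr2
      have ht_pos : 0 < |s - sstar| := abs_pos.mpr (sub_ne_zero.mpr hne)
      have haw : 0 < a * |s - sstar| := mul_pos ha ht_pos
      -- (1+m^2)^(-b) ≤ ((a|t|)^2)^(-b)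
      have hstep1 : (1 + m^2) ^ (-b) ≤ ((a * |s - sstar|)^2) ^ (-b) := by
        apply Real.rpow_le_rpow_of_nonpos (by positivity)
        · nlinarith
        · linarith
      have hstep2 : ((a * |s - sstar|)^2) ^ (-b) = a ^ (-p) * |s - sstar| ^ (-p) := by
        rw [sqRpowNeg haw.le, ← hp_def, Real.mul_rpow ha.le (abs_nonneg _)]
      have hexp_le : Real.exp (-α*s) ≤ Real.exp (-α*(sstar+2)) := by
        apply Real.exp_le_exp.mpr
        nlinarith
      calc Real.exp (-α*s) * (1 + m^2) ^ (-b)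
          ≤ Real.exp (-α*(sstar+2)) * ((a * |s - sstar|)^2) ^ (-b) := by
            apply mul_le_mul hexp_le hstep1 (Real.rpow_nonneg (by positivity) _) (Real.exp_nonneg _)
        _ = M * G (s - sstar) := by
            rw [hstep2, hM_def, hG_def]; ring
  · -- case (i) : p = 2b > 1
    set p := 2*b with hp_def
    refine ⟨8 * Real.exp 1 ^ 3 / (p - 1), fun s₀ hs₀ sstar => ?_⟩
    have hu : (0:ℝ) < Real.exp (sstar/2) := Real.exp_pos _
    set u := Real.exp (sstar/2) with hu_def
    set a := u / (2 * Real.exp 1) with ha_def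
    have ha : 0 < a := by positivity
    set G := fun t : ℝ => (1 + a * |t|) ^ (-p) with hG_def
    set M := 2 ^ b * Real.exp (-α*(sstar+2)) with hM_def
    have hM : 0 ≤ M := by positivity
    have hGeven : ∀ t, G (-t) = G t := by intro t; simp [hG_def, abs_neg]
    have hbase_pos : ∀ t : ℝ, (0:ℝ) < 1 + a * |t| := by
      intro t; have := mul_nonneg ha.le (abs_nonneg t); linarith
    have hG0 : ∀ t, 0 ≤ G t := fun t => Real.rpow_nonneg (hbase_pos t).le _
    have hGcont : Continuous G := by
      apply Continuous.rpow_const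
      · exact continuous_const.add (continuous_const.mul continuous_abs)
      · intro x; exact Or.inl (hbase_pos x).ne'
    have hGI : IntervalIntegrable G volume 0 2 := hGcont.intervalIntegrable 0 2
    have hIval : (∫ t in (0:ℝ)..2, G t) ≤ 1 / (a * (p - 1)) := by
      have hcong : ∫ t in (0:ℝ)..2, G t = ∫ t in (0:ℝ)..2, (a * t + 1) ^ (-p) := by
        refine intervalIntegral.integral_congr ?_
        intro x hx
        rw [uIcc_of_le (by norm_num : (0:ℝ) ≤ 2)] at hx
        simp only [hG_def]
        rw [abs_of_nonneg hx.1]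
        ring_nf
      rw [hcong]
      have hcomp := intervalIntegral.integral_comp_mul_add (a := 0) (b := 2)
        (f := fun x : ℝ => x ^ (-p)) ha.ne' 1
      rw [hcomp]
      have h1le : (1:ℝ) ≤ a * 2 + 1 := by nlinarith
      have hne : (-p : ℝ) ≠ -1 := by
        intro h
        have hcontr : p = 1 := by linarith
        linarith
      have hnm : (0:ℝ) ∉ Set.uIcc (a*0+1) (a*2+1) := by
        rw [show a*0+1 = (1:ℝ) by ring, uIcc_of_le h1le]
        intro hmem
        have := hmem.1
        linarith
      have hval := integral_rpow (a := a*0+1) (b := a*2+1) (Or.inr ⟨hne, hnm⟩)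
      rw [hval]
      have hrp0 : (0:ℝ) ≤ (a*2+1) ^ (-p+1) := Real.rpow_nonneg (by linarith) _
      have h1p : ((a*0+1):ℝ) ^ (-p+1) = 1 := by
        rw [show a*0+1 = (1:ℝ) by ring, Real.one_rpow]
      rw [h1p]
      rw [smul_eq_mul]
      have hstep : ((a*2+1) ^ (-p+1) - 1) / (-p+1) ≤ 1 / (p-1) := by
        rw [show ((a*2+1) ^ (-p+1) - 1) / (-p+1) = (1 - (a*2+1) ^ (-p+1)) / (p-1) by
          rw [show ((1:ℝ) - (a*2+1) ^ (-p+1)) = -((a*2+1) ^ (-p+1) - 1) by ring,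
            show (p-1 : ℝ) = -(-p+1) by ring, neg_div_neg_eq]]
        gcongr
        · linarith
      calc a⁻¹ * (((a*2+1) ^ (-p+1) - 1) / (-p+1)) ≤ a⁻¹ * (1/(p-1)) := by
            apply mul_le_mul_of_nonneg_left hstep (by positivity)
        _ = 1 / (a * (p-1)) := by
            field_simp
    have hc₃0 : (0:ℝ) ≤ 8 * Real.exp 1 ^ 3 / (p - 1) := by
      apply div_nonneg (by positivity); linarith
    have hMI : s₀ < sstar + 2 → M * (2 * (1 / (a * (p - 1)))) ≤ 8 * Real.exp 1 ^ 3 / (p - 1) := by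
      intro hlt
      have hsstar : -2 ≤ sstar := by linarith
      -- exp(-α(sstar+2))/u ≤ exp 2
      have hdivu : Real.exp (-α*(sstar+2)) / u = Real.exp (-α*(sstar+2) - sstar/2) := by
        rw [hu_def, ← Real.exp_sub]
      have hexp2 : Real.exp (-α*(sstar+2) - sstar/2) ≤ Real.exp 1 ^ 2 := by
        have : Real.exp 1 ^ 2 = Real.exp 2 := by
          rw [← Real.exp_nat_mul]; norm_num
        rw [this]
        apply Real.exp_le_exp.mpr
        nlinarith [mul_nonneg (by linarith : (0:ℝ) ≤ α + 1/2) (by linarith : (0:ℝ) ≤ sstar + 2)]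
      have h2b : (2:ℝ) ^ b ≤ 2 := by
        have := Real.rpow_le_rpow_of_exponent_le (one_le_two) hb1
        rwa [Real.rpow_one] at this
      have h2b0 : (0:ℝ) ≤ (2:ℝ) ^ b := Real.rpow_nonneg (by norm_num) _
      have hrw : M * (2 * (1 / (a * (p - 1))))
          = (2:ℝ)^b * (Real.exp (-α*(sstar+2)) / u) * (4 * Real.exp 1) / (p - 1) := by
        rw [hM_def, ha_def]
        field_simp
        ring
      rw [hrw, hdivu]
      have hnum : (2:ℝ)^b * Real.exp (-α*(sstar+2) - sstar/2) * (4 * Real.exp 1)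
          ≤ 8 * Real.exp 1 ^ 3 := by
        have e1cube : (8:ℝ) * Real.exp 1 ^ 3 = 2 * Real.exp 1 ^ 2 * (4 * Real.exp 1) := by ring
        rw [e1cube]
        apply mul_le_mul_of_nonneg_right ?_ (by positivity)
        exact mul_le_mul h2b hexp2 (Real.exp_nonneg _) (by norm_num)
      exact (div_le_div_iff_of_pos_right (by linarith : (0:ℝ) < p - 1)).mpr hnum
    obtain ⟨hint, hbd⟩ := midPack hGeven hG0 hGI sstar s₀ M (8 * Real.exp 1 ^ 3 / (p - 1))
      (1 / (a * (p - 1))) hM hc₃0 hIval hMI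
    refine ⟨_, ?_, hint, hbd, ?_⟩
    · intro s
      exact Set.indicator_nonneg (fun x _ => mul_nonneg hM (hG0 _)) s
    · intro s hne hr1 hr2
      have hmem : s ∈ Icc (sstar - 2) (sstar + 2) := ⟨hr1.le, hr2.le⟩
      rw [Set.indicator_of_mem hmem]
      set m := min (Real.exp (s/2)) |Real.exp (s/2) - u| with hm_def
      have hm0 : 0 ≤ m := le_min (Real.exp_pos _).le (abs_nonneg _)
      have hw : a * |s - sstar| ≤ m := hwLemma hr1 hr2
      have haw : 0 ≤ a * |s - sstar| := mul_nonneg ha.le (abs_nonneg _)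
      have hsq : (1 + a * |s - sstar|)^2 / 2 ≤ 1 + m^2 := by
        nlinarith [sq_nonneg (m - 1), mul_nonneg (sub_nonneg.mpr hw) (by linarith : 0 ≤ m + a * |s - sstar|)]
      have hstep1 : (1 + m^2) ^ (-b) ≤ ((1 + a * |s - sstar|)^2 / 2) ^ (-b) := by
        apply Real.rpow_le_rpow_of_nonpos (by positivity) hsq (by linarith)
      have hstep2 : ((1 + a * |s - sstar|)^2 / 2) ^ (-b)
          = 2 ^ b * (1 + a * |s - sstar|) ^ (-p) := by
        rw [Real.div_rpow (by positivity) (by norm_num : (0:ℝ) ≤ 2)]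
        rw [sqRpowNeg (by positivity) b, ← hp_def]
        rw [Real.rpow_neg (by norm_num : (0:ℝ) ≤ 2)]
        rw [div_eq_mul_inv, inv_inv]
        ring
      have hexp_le : Real.exp (-α*s) ≤ Real.exp (-α*(sstar+2)) := by
        apply Real.exp_le_exp.mpr
        nlinarith
      calc Real.exp (-α*s) * (1 + m^2) ^ (-b)
          ≤ Real.exp (-α*(sstar+2)) * ((1 + a * |s - sstar|)^2 / 2) ^ (-b) := by
            apply mul_le_mul hexp_le hstep1 (Real.rpow_nonneg (by positivity) _)
              (Real.exp_nonneg _)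
        _ = M * G (s - sstar) := by
            rw [hstep2, hM_def, hG_def]
            ring

lemma auxBound (α b : ℝ) (hα : -(1/2) ≤ α) (hα0 : α ≤ 0) (hb0 : 0 ≤ b) (hb1 : b ≤ 1)
    (hab : 0 < α + b) (hcase : 2*b < 1 ∨ 1 < 2*b) :
    ∃ C : ℝ, ∀ s₀ : ℝ, 0 ≤ s₀ → ∀ sstar : ℝ,
      IntegrableOn (fun s : ℝ => Real.exp (-α*s) *
        (1 + (min (Real.exp (s/2)) |Real.exp (s/2) - Real.exp (sstar/2)|)^2)^(-b)) (Ioi s₀) ∧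
      (∫ s in Ioi s₀, Real.exp (-α*s) *
        (1 + (min (Real.exp (s/2)) |Real.exp (s/2) - Real.exp (sstar/2)|)^2)^(-b)) ≤ C := by
  have he1 : (2:ℝ) ≤ Real.exp 1 := by linarith [Real.add_one_le_exp (1:ℝ)]
  obtain ⟨c₃, hmid⟩ := midCase α b hα hα0 hb0 hb1 hab hcase
  refine ⟨(4:ℝ)^b / (α+b) + c₃, fun s₀ hs₀ sstar => ?_⟩
  obtain ⟨h₃, h₃0, h₃int, h₃bd, h₃pt⟩ := hmid s₀ hs₀ sstar
  have h4b1 : (1:ℝ) ≤ (4:ℝ)^b := by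
    have := Real.rpow_le_rpow_of_exponent_le (by norm_num : (1:ℝ) ≤ 4) hb0
    rwa [Real.rpow_zero] at this
  obtain ⟨eint, eval⟩ := expInt hab s₀
  have hexp_int : IntegrableOn (fun s : ℝ => (4:ℝ)^b * Real.exp (-((α+b)*s))) (Ioi s₀) :=
    eint.const_mul _
  set g := fun s : ℝ => Real.exp (-α*s) *
    (1 + (min (Real.exp (s/2)) |Real.exp (s/2) - Real.exp (sstar/2)|)^2)^(-b) with hg_def
  set h := fun s : ℝ => (4:ℝ)^b * Real.exp (-((α+b)*s)) + h₃ s with hh_def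
  have hint : IntegrableOn h (Ioi s₀) := hexp_int.add h₃int
  have hu : (0:ℝ) < Real.exp (sstar/2) := Real.exp_pos _
  -- pointwise bound
  have key : ∀ s : ℝ, s₀ < s → s ≠ sstar → g s ≤ h s := by
    intro s hs hne
    set u := Real.exp (sstar/2) with hu_def
    set m := min (Real.exp (s/2)) |Real.exp (s/2) - u| with hm_def
    have hm0 : 0 ≤ m := le_min (Real.exp_pos _).le (abs_nonneg _)
    have hE2 : Real.exp (s/2) ^ 2 = Real.exp s := by
      rw [pow_two, ← Real.exp_add, add_halves]
    have h₃nn : 0 ≤ h₃ s := h₃0 s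
    have hexp_nn : 0 ≤ Real.exp (-α*s) := (Real.exp_pos _).le
    rcases le_or_gt (sstar + 2) s with hreg | hreg
    · -- right outer region
      have hu_le : u ≤ Real.exp (s/2) / 2 := by
        have h1 : Real.exp (sstar/2) ≤ Real.exp (s/2 - 1) :=
          Real.exp_le_exp.mpr (by linarith)
        have h2 : Real.exp (s/2 - 1) = Real.exp (s/2) / Real.exp 1 := Real.exp_sub _ _
        have h3 : Real.exp (s/2) / Real.exp 1 ≤ Real.exp (s/2) / 2 :=
          div_le_div_of_nonneg_left (Real.exp_pos _).le (by norm_num) he1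
        rw [hu_def]; rw [h2] at h1; linarith
      have hm_ge : Real.exp (s/2) / 2 ≤ m := by
        refine le_min (by linarith [Real.exp_pos (s/2)]) ?_
        have := le_abs_self (Real.exp (s/2) - u)
        linarith
      have msq : Real.exp s / 4 ≤ 1 + m^2 := by
        have h4 := pow_le_pow_left₀ (by positivity) hm_ge 2
        rw [div_pow, hE2] at h4
        norm_num at h4
        linarith
      have hb1' : (1 + m^2) ^ (-b) ≤ (Real.exp s / 4) ^ (-b) :=
        Real.rpow_le_rpow_of_nonpos (by positivity) msq (by linarith)
      have heq : (Real.exp s / 4) ^ (-b) = (4:ℝ)^b * Real.exp (s * (-b)) := by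
        rw [Real.div_rpow (Real.exp_nonneg _) (by norm_num : (0:ℝ) ≤ 4),
          Real.rpow_neg (by norm_num : (0:ℝ) ≤ 4), div_eq_mul_inv, inv_inv, ← Real.exp_mul]
        ring
      have : g s ≤ (4:ℝ)^b * Real.exp (-((α+b)*s)) := by
        calc g s ≤ Real.exp (-α*s) * ((4:ℝ)^b * Real.exp (s * (-b))) := by
              rw [hg_def]
              exact mul_le_mul_of_nonneg_left (heq ▸ hb1') hexp_nn
          _ = (4:ℝ)^b * Real.exp (-((α+b)*s)) := by
              rw [show Real.exp (-α*s) * ((4:ℝ)^b * Real.exp (s * (-b)))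
                  = (4:ℝ)^b * (Real.exp (-α*s) * Real.exp (s * (-b))) by ring,
                ← Real.exp_add, show -α*s + s*(-b) = -((α+b)*s) by ring]
      rw [hh_def]; dsimp only; linarith
    rcases le_or_gt s (sstar - 2) with hreg2 | hreg2
    · -- left outer region
      have hu_ge : Real.exp (s/2) * 2 ≤ u := by
        have h1 : Real.exp (s/2 + 1) ≤ Real.exp (sstar/2) :=
          Real.exp_le_exp.mpr (by linarith)
        have h2 : Real.exp (s/2 + 1) = Real.exp (s/2) * Real.exp 1 := Real.exp_add _ _
        rw [hu_def]
        nlinarith [Real.exp_pos (s/2)]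
      have hm_ge : Real.exp (s/2) ≤ m := by
        refine le_min le_rfl ?_
        have h3 : Real.exp (s/2) ≤ u - Real.exp (s/2) := by linarith [Real.exp_pos (s/2)]
        have := neg_abs_le (Real.exp (s/2) - u)
        rw [abs_sub_comm]
        calc Real.exp (s/2) ≤ u - Real.exp (s/2) := h3
          _ ≤ |u - Real.exp (s/2)| := le_abs_self _
      have msq : Real.exp s ≤ 1 + m^2 := by
        have h4 := pow_le_pow_left₀ (Real.exp_nonneg _) hm_ge 2
        rw [hE2] at h4
        linarith
      have hb1' : (1 + m^2) ^ (-b) ≤ (Real.exp s) ^ (-b) :=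
        Real.rpow_le_rpow_of_nonpos (by positivity) msq (by linarith)
      have heq : (Real.exp s) ^ (-b) = Real.exp (s * (-b)) := (Real.exp_mul s (-b)).symm
      have hle : g s ≤ (4:ℝ)^b * Real.exp (-((α+b)*s)) := by
        calc g s ≤ Real.exp (-α*s) * Real.exp (s * (-b)) := by
              rw [hg_def]
              exact mul_le_mul_of_nonneg_left (heq ▸ hb1') hexp_nn
          _ = Real.exp (-((α+b)*s)) := by
              rw [← Real.exp_add, show -α*s + s*(-b) = -((α+b)*s) by ring]
          _ ≤ (4:ℝ)^b * Real.exp (-((α+b)*s)) := by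
              nlinarith [Real.exp_pos (-((α+b)*s))]
      rw [hh_def]; dsimp only; linarith
    · -- middle region
      have := h₃pt s hne (by linarith) (by linarith)
      rw [hh_def]; dsimp only
      have hexp4 : 0 ≤ (4:ℝ)^b * Real.exp (-((α+b)*s)) := by positivity
      rw [hg_def]
      dsimp only
      rw [hu_def] at this
      linarith [this]
  -- continuity and nonnegativity of g
  have hgcont : Continuous g := by
    rw [hg_def]
    apply Continuous.mul
    · exact Real.continuous_exp.comp (continuous_const.mul continuous_id)
    · apply Continuous.rpow_const
      · apply continuous_const.add
        apply Continuous.pow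
        apply Continuous.min
        · exact Real.continuous_exp.comp (continuous_id.div_const 2)
        · apply Continuous.abs
          exact (Real.continuous_exp.comp (continuous_id.div_const 2)).sub continuous_const
      · intro x
        left
        have : (0:ℝ) ≤ (min (Real.exp (x/2)) |Real.exp (x/2) - Real.exp (sstar/2)|)^2 :=
          sq_nonneg _
        positivity
  have hg0 : ∀ s, 0 ≤ g s := by
    intro s
    apply mul_nonneg (Real.exp_nonneg _)
    apply Real.rpow_nonneg
    have := sq_nonneg (min (Real.exp (s/2)) |Real.exp (s/2) - Real.exp (sstar/2)|)
    linarith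
  have hne_ae : ∀ᵐ s : ℝ, s ≠ sstar := by
    rw [ae_iff]
    have : {x : ℝ | ¬x ≠ sstar} = {sstar} := by ext x; simp
    rw [this]
    exact Real.volume_singleton
  have hae : ∀ᵐ s ∂(volume.restrict (Ioi s₀)), g s ≤ h s := by
    filter_upwards [ae_restrict_mem measurableSet_Ioi, ae_restrict_of_ae hne_ae] with s hs hs2
    exact key s hs hs2
  have hgint : IntegrableOn g (Ioi s₀) := by
    refine Integrable.mono' hint (hgcont.aestronglyMeasurable.restrict) ?_
    filter_upwards [hae] with s hs
    rw [Real.norm_eq_abs, abs_of_nonneg (hg0 s)]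
    exact hs
  refine ⟨hgint, ?_⟩
  have hmono : (∫ s in Ioi s₀, g s) ≤ ∫ s in Ioi s₀, h s := integral_mono_ae hgint hint hae
  have hsplit : (∫ s in Ioi s₀, h s)
      = (∫ s in Ioi s₀, (4:ℝ)^b * Real.exp (-((α+b)*s))) + ∫ s in Ioi s₀, h₃ s := by
    rw [hh_def]
    exact integral_add hexp_int h₃int
  have hexp_val : (∫ s in Ioi s₀, (4:ℝ)^b * Real.exp (-((α+b)*s))) ≤ (4:ℝ)^b / (α+b) := by
    rw [integral_const_mul, eval]
    have hle1 : Real.exp (-((α+b)*s₀)) ≤ 1 := by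
      apply Real.exp_le_one_iff.mpr
      have : 0 ≤ (α+b)*s₀ := mul_nonneg hab.le hs₀
      linarith
    have h4bnn : (0:ℝ) ≤ (4:ℝ)^b := by linarith
    calc (4:ℝ)^b * (Real.exp (-((α+b)*s₀)) / (α+b))
        ≤ (4:ℝ)^b * (1 / (α+b)) := by
          apply mul_le_mul_of_nonneg_left ?_ h4bnn
          gcongr
      _ = (4:ℝ)^b / (α+b) := by ring
  calc (∫ s in Ioi s₀, g s) ≤ _ := hmono
    _ = _ := hsplit
    _ ≤ (4:ℝ)^b / (α+b) + c₃ := add_le_add hexp_val h₃bd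

/-- Uniform integrability of the weight `θ(α,β)(y,s) = e^{-αs} η(y)^{-β}`, with
`η(y) = 1 + y₁² + (y₂² + y₃²)³`, along trajectories whose first component satisfies
`|Φ₁(s)| ≥ min(e^{s/2}, |e^{s/2} - e^{s★/2}|)`: for `-1/2 ≤ α ≤ 0 ≤ β` with
`α + β > 0` there is `C = C(α,β)`, independent of `s₀ ≥ 0` and `s★`, bounding the
integral. -/
theorem weight_integrable_along_ZU_trajectories
    (α β : ℝ) (hα : -(1 / 2) ≤ α) (hα0 : α ≤ 0) (hβ : 0 ≤ β) (hαβ : 0 < α + β) :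
    ∃ C : ℝ, ∀ s₀ : ℝ, 0 ≤ s₀ → ∀ sstar : ℝ, ∀ Φ : ℝ → Fin 3 → ℝ,
      ContinuousOn Φ (Ici s₀) →
      (∀ s : ℝ, s₀ ≤ s →
        min (Real.exp (s / 2)) |Real.exp (s / 2) - Real.exp (sstar / 2)|
          ≤ |Φ s 0|) →
      IntegrableOn
        (fun s : ℝ => Real.exp (-α * s)
          * (1 + Φ s 0 ^ 2 + (Φ s 1 ^ 2 + Φ s 2 ^ 2) ^ 3) ^ (-β)) (Ioi s₀) ∧
      ∫ s in Ioi s₀,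
          Real.exp (-α * s)
            * (1 + Φ s 0 ^ 2 + (Φ s 1 ^ 2 + Φ s 2 ^ 2) ^ 3) ^ (-β)
        ≤ C := by
  -- choose exponent b
  obtain ⟨b, hb0, hb1, hab, hbβ, hcase⟩ :
      ∃ b : ℝ, 0 ≤ b ∧ b ≤ 1 ∧ 0 < α + b ∧ b ≤ β ∧ (2*b < 1 ∨ 1 < 2*b) := by
    rcases le_or_gt β (1/2) with hsm | hlg
    · exact ⟨(β - α)/2, by linarith, by linarith, by linarith, by linarith,
        Or.inl (by linarith)⟩
    · refine ⟨(1/2 + min β 1)/2, ?_, ?_, ?_, ?_, Or.inr ?_⟩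
      · have := le_min hlg.le (by norm_num : (1:ℝ)/2 ≤ 1); linarith [min_le_right β 1]
      · linarith [min_le_right β 1]
      · have h1 : (1:ℝ)/2 < min β 1 := lt_min hlg (by norm_num)
        linarith
      · have h1 : (1:ℝ)/2 < min β 1 := lt_min hlg (by norm_num)
        have h2 : min β 1 ≤ β := min_le_left _ _
        linarith
      · have h1 : (1:ℝ)/2 < min β 1 := lt_min hlg (by norm_num)
        linarith
  obtain ⟨C, hC⟩ := auxBound α b hα hα0 hb0 hb1 hab hcase
  refine ⟨C, fun s₀ hs₀ sstar Φ hΦc hΦlb => ?_⟩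
  obtain ⟨hgint, hgbd⟩ := hC s₀ hs₀ sstar
  set g := fun s : ℝ => Real.exp (-α*s) *
    (1 + (min (Real.exp (s/2)) |Real.exp (s/2) - Real.exp (sstar/2)|)^2)^(-b) with hg_def
  set f := fun s : ℝ => Real.exp (-α * s)
    * (1 + Φ s 0 ^ 2 + (Φ s 1 ^ 2 + Φ s 2 ^ 2) ^ 3) ^ (-β) with hf_def
  -- basic positivity of the base
  have hbase_pos : ∀ s : ℝ, 0 < 1 + Φ s 0 ^ 2 + (Φ s 1 ^ 2 + Φ s 2 ^ 2) ^ 3 := by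
    intro s
    have h1 : 0 ≤ Φ s 0 ^ 2 := sq_nonneg _
    have h2 : 0 ≤ (Φ s 1 ^ 2 + Φ s 2 ^ 2) ^ 3 :=
      pow_nonneg (by positivity) 3
    linarith
  have hf0 : ∀ s, 0 ≤ f s := fun s =>
    mul_nonneg (Real.exp_nonneg _) (Real.rpow_nonneg (hbase_pos s).le _)
  -- pointwise comparison
  have hfg : ∀ s : ℝ, s₀ ≤ s → f s ≤ g s := by
    intro s hs
    set m := min (Real.exp (s/2)) |Real.exp (s/2) - Real.exp (sstar/2)| with hm_def
    have hm0 : 0 ≤ m := le_min (Real.exp_pos _).le (abs_nonneg _)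
    have hmΦ : m ≤ |Φ s 0| := hΦlb s hs
    have hmsq : m ^ 2 ≤ Φ s 0 ^ 2 := by
      have := pow_le_pow_left₀ hm0 hmΦ 2
      rwa [sq_abs] at this
    have hq : 0 ≤ (Φ s 1 ^ 2 + Φ s 2 ^ 2) ^ 3 := pow_nonneg (by positivity) 3
    have hX : 1 + m^2 ≤ 1 + Φ s 0 ^ 2 + (Φ s 1 ^ 2 + Φ s 2 ^ 2) ^ 3 := by linarith
    have step1 : (1 + Φ s 0 ^ 2 + (Φ s 1 ^ 2 + Φ s 2 ^ 2) ^ 3) ^ (-β)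
        ≤ (1 + m^2) ^ (-β) :=
      Real.rpow_le_rpow_of_nonpos (by positivity) hX (by linarith)
    have step2 : (1 + m^2) ^ (-β) ≤ (1 + m^2) ^ (-b) :=
      Real.rpow_le_rpow_of_exponent_le (by nlinarith) (by linarith)
    rw [hf_def, hg_def]
    dsimp only
    apply mul_le_mul_of_nonneg_left (step1.trans step2) (Real.exp_nonneg _)
  -- measurability of f
  have hfm : AEStronglyMeasurable f (volume.restrict (Ioi s₀)) := by
    have hΦ0 : ContinuousOn (fun s => Φ s 0) (Ici s₀) := (continuous_apply 0).comp_continuousOn hΦc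
    have hΦ1 : ContinuousOn (fun s => Φ s 1) (Ici s₀) := (continuous_apply 1).comp_continuousOn hΦc
    have hΦ2 : ContinuousOn (fun s => Φ s 2) (Ici s₀) := (continuous_apply 2).comp_continuousOn hΦc
    have hbasec : ContinuousOn
        (fun s => 1 + Φ s 0 ^ 2 + (Φ s 1 ^ 2 + Φ s 2 ^ 2) ^ 3) (Ici s₀) := by
      apply ContinuousOn.add
      · exact continuousOn_const.add (hΦ0.pow 2)
      · exact ((hΦ1.pow 2).add (hΦ2.pow 2)).pow 3
    have hrp : ContinuousOn
        (fun s => (1 + Φ s 0 ^ 2 + (Φ s 1 ^ 2 + Φ s 2 ^ 2) ^ 3) ^ (-β)) (Ici s₀) := by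
      apply ContinuousOn.rpow_const hbasec
      intro x _
      exact Or.inl (hbase_pos x).ne'
    have hfc : ContinuousOn f (Ici s₀) := by
      rw [hf_def]
      exact ((Real.continuous_exp.comp (continuous_const.mul continuous_id)).continuousOn).mul hrp
    exact (hfc.mono Ioi_subset_Ici_self).aestronglyMeasurable measurableSet_Ioi
  have haefg : ∀ᵐ s ∂(volume.restrict (Ioi s₀)), f s ≤ g s := by
    filter_upwards [ae_restrict_mem measurableSet_Ioi] with s hs
    exact hfg s (le_of_lt hs)
  have hfint : IntegrableOn f (Ioi s₀) := by
    refine Integrable.mono' hgint hfm ?_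
    filter_upwards [haefg] with s hs
    rw [Real.norm_eq_abs, abs_of_nonneg (hf0 s)]
    exact hs
  exact ⟨hfint, (integral_mono_ae hfint hgint haefg).trans hgbd⟩
end

section
/- Let a ≥ 1 and let f ∈ C¹(ℝ) be bounded with f'(ξ) ≥ -1 for all ξ. For t ≥ -1 define g_t(ξ) = ξ + (f(ξ)/a)(1 - e^{-a(t+1)}). Then for each t ≥ -1, g_t is a C¹ diffeomorphism of ℝ (indeed g_t'(ξ) = 1 + (f'(ξ)/a)(1 - e^{-a(t+1)}) ≥ e^{-a(t+1)}/a > 0), and u(x, t) := e^{-a(t+1)} f(g_t^{-1}(x)) defines a C¹ function on ℝ × [-1, ∞) that solves the damped Burgers equation ∂ₜu + u ∂ₓu = -au with u(·, -1) = f. Thus for a ≥ 1 the damping is strong enough to yield a global smooth solution. -/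
open Set Function

noncomputable def shearEquiv (P D : ℝ) (hD : D ≠ 0) : (ℝ × ℝ) ≃L[ℝ] (ℝ × ℝ) :=
  LinearEquiv.toContinuousLinearEquiv <|
    LinearEquiv.ofLinear
      ((LinearMap.fst ℝ ℝ ℝ).prod (P • LinearMap.fst ℝ ℝ ℝ + D • LinearMap.snd ℝ ℝ ℝ))
      ((LinearMap.fst ℝ ℝ ℝ).prod (D⁻¹ • (LinearMap.snd ℝ ℝ ℝ - P • LinearMap.fst ℝ ℝ ℝ)))
      (by
        apply LinearMap.ext; rintro ⟨x, y⟩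
        simp
        field_simp
        ring)
      (by
        apply LinearMap.ext; rintro ⟨x, y⟩
        simp
        field_simp)

@[simp] lemma shearEquiv_apply (P D : ℝ) (hD : D ≠ 0) (p : ℝ × ℝ) :
    shearEquiv P D hD p = (p.1, P * p.1 + D * p.2) := by
  simp [shearEquiv]

lemma shearEquiv_symm_apply (P D : ℝ) (hD : D ≠ 0) (p : ℝ × ℝ) :
    (shearEquiv P D hD).symm p = (p.1, (p.2 - P * p.1) / D) := by
  rw [ContinuousLinearEquiv.symm_apply_eq, shearEquiv_apply]
  field_simp
  refine Prod.ext rfl ?_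
  show p.2 = P * p.1 + (p.2 - P * p.1)
  ring
lemma key (a : ℝ) (ha : 0 < a) (f : ℝ → ℝ) (hf : ContDiff ℝ 1 f)
    (G : ℝ → ℝ → ℝ)
    (hG : ∀ t ξ : ℝ, G t ξ = ξ + f ξ / a * (1 - Real.exp (-a * (t + 1))))
    (t₀ ξ₀ : ℝ)
    (hD : 1 + deriv f ξ₀ / a * (1 - Real.exp (-a * (t₀ + 1))) ≠ 0) :
    ∃ H : ℝ × ℝ → ℝ,
      ContDiffAt ℝ 1 H (t₀, G t₀ ξ₀) ∧ H (t₀, G t₀ ξ₀) = ξ₀ ∧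
      HasDerivAt (fun t => H (t, G t₀ ξ₀))
        (-(f ξ₀ * Real.exp (-a * (t₀ + 1))) /
          (1 + deriv f ξ₀ / a * (1 - Real.exp (-a * (t₀ + 1))))) t₀ ∧
      HasDerivAt (fun x => H (t₀, x))
        (1 + deriv f ξ₀ / a * (1 - Real.exp (-a * (t₀ + 1))))⁻¹ (G t₀ ξ₀) ∧
      ∀ᶠ p : ℝ × ℝ in nhds (t₀, G t₀ ξ₀), G p.1 (H p) = p.2 := by
  set E₀ := Real.exp (-a * (t₀ + 1)) with hE₀
  set D := 1 + deriv f ξ₀ / a * (1 - E₀) with hDdef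
  set P := f ξ₀ * E₀ with hPdef
  set Φ : ℝ × ℝ → ℝ × ℝ := fun p => (p.1, G p.1 p.2) with hΦ
  have hΦeq : Φ = fun p : ℝ × ℝ =>
      (p.1, p.2 + f p.2 / a * (1 - Real.exp (-a * (p.1 + 1)))) := by
    funext p; simp [hΦ, hG]
  have hfd : Differentiable ℝ f := hf.differentiable one_ne_zero
  -- Φ is C¹
  have hΦc : ContDiff ℝ 1 Φ := by
    rw [hΦeq]
    refine contDiff_fst.prodMk (contDiff_snd.add (ContDiff.mul ?_ ?_))
    · exact (hf.div_const a).comp contDiff_snd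
    · refine contDiff_const.sub ?_
      exact (Real.contDiff_exp.comp
        (contDiff_const.mul (contDiff_id.add contDiff_const))).comp contDiff_fst
  -- derivative of Φ at (t₀, ξ₀)
  have h1 : HasDerivAt (fun y => f y / a) (deriv f ξ₀ / a) ξ₀ :=
    ((hfd ξ₀).hasDerivAt).div_const a
  have hf2 : HasFDerivAt (fun p : ℝ × ℝ => f p.2 / a)
      ((deriv f ξ₀ / a) • ContinuousLinearMap.snd ℝ ℝ ℝ) (t₀, ξ₀) :=
    HasDerivAt.comp_hasFDerivAt (h₂ := fun y => f y / a) (t₀, ξ₀) h1 hasFDerivAt_snd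
  have h3 : HasDerivAt (fun t : ℝ => 1 - Real.exp (-a * (t + 1))) (a * E₀) t₀ := by
    have h := ((((hasDerivAt_id t₀).add_const 1).const_mul (-a)).exp).const_sub 1
    refine h.congr_deriv ?_
    simp [hE₀]; ring
  have hf3 : HasFDerivAt (fun p : ℝ × ℝ => 1 - Real.exp (-a * (p.1 + 1)))
      ((a * E₀) • ContinuousLinearMap.fst ℝ ℝ ℝ) (t₀, ξ₀) :=
    HasDerivAt.comp_hasFDerivAt (h₂ := fun t : ℝ => 1 - Real.exp (-a * (t + 1))) (t₀, ξ₀) h3 hasFDerivAt_fst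
  have hmul := hf2.mul hf3
  have hΦ2 : HasFDerivAt (fun p : ℝ × ℝ => p.2 + f p.2 / a * (1 - Real.exp (-a * (p.1 + 1))))
      (ContinuousLinearMap.snd ℝ ℝ ℝ +
        ((f ξ₀ / a) • ((a * E₀) • ContinuousLinearMap.fst ℝ ℝ ℝ) +
          (1 - E₀) • ((deriv f ξ₀ / a) • ContinuousLinearMap.snd ℝ ℝ ℝ))) (t₀, ξ₀) :=
    hasFDerivAt_snd.add hmul
  have he : HasFDerivAt Φ ((shearEquiv P D hD : (ℝ × ℝ) →L[ℝ] (ℝ × ℝ))) (t₀, ξ₀) := by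
    rw [hΦeq]
    refine HasFDerivAt.congr_fderiv (hasFDerivAt_fst.prodMk hΦ2) (Eq.symm ?_)
    apply ContinuousLinearMap.ext
    rintro ⟨s, y⟩
    have : ((shearEquiv P D hD : (ℝ × ℝ) →L[ℝ] (ℝ × ℝ)) (s, y)) = (s, P * s + D * y) := by
      exact shearEquiv_apply P D hD (s, y)
    rw [this]
    simp [hPdef, hDdef]
    field_simp
    ring
  have hs : HasStrictFDerivAt Φ ((shearEquiv P D hD : (ℝ × ℝ) →L[ℝ] (ℝ × ℝ))) (t₀, ξ₀) :=
    hΦc.contDiffAt.hasStrictFDerivAt' he one_ne_zero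
  set linv := hs.localInverse Φ (shearEquiv P D hD) (t₀, ξ₀) with hlinv
  have himgq : Φ (t₀, ξ₀) = (t₀, G t₀ ξ₀) := rfl
  have hCD : ContDiffAt ℝ 1 linv (t₀, G t₀ ξ₀) := by
    rw [← himgq]
    exact ContDiffAt.to_localInverse hΦc.contDiffAt he one_ne_zero
  have himg : linv (t₀, G t₀ ξ₀) = (t₀, ξ₀) := hs.localInverse_apply_image
  have hinvd : HasStrictFDerivAt linv
      ((shearEquiv P D hD).symm : (ℝ × ℝ) →L[ℝ] (ℝ × ℝ)) (t₀, G t₀ ξ₀) := hs.to_localInverse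
  have hev : ∀ᶠ p : ℝ × ℝ in nhds (t₀, G t₀ ξ₀), Φ (linv p) = p := hs.eventually_right_inverse
  refine ⟨fun p => (linv p).2, ?_, ?_, ?_, ?_, ?_⟩
  · exact (contDiffAt_snd).comp _ hCD
  · show (linv (t₀, G t₀ ξ₀)).2 = ξ₀
    rw [himg]
  · have hcurve : HasDerivAt (fun t : ℝ => (t, G t₀ ξ₀)) ((1 : ℝ), (0 : ℝ)) t₀ :=
      (hasDerivAt_id t₀).prodMk (hasDerivAt_const t₀ _)
    have h4 : HasDerivAt (fun t => linv (t, G t₀ ξ₀))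
        ((shearEquiv P D hD).symm (1, 0)) t₀ :=
      HasFDerivAt.comp_hasDerivAt (l := linv)
        (l' := ((shearEquiv P D hD).symm : (ℝ × ℝ) →L[ℝ] (ℝ × ℝ))) t₀ hinvd.hasFDerivAt hcurve
    have h5 := (ContinuousLinearMap.snd ℝ ℝ ℝ).hasFDerivAt.comp_hasDerivAt t₀ h4
    refine HasDerivAt.congr_deriv h5 (Eq.symm ?_)
    rw [shearEquiv_symm_apply]
    simp [hPdef]
  · have hcurve : HasDerivAt (fun x : ℝ => (t₀, x)) ((0 : ℝ), (1 : ℝ)) (G t₀ ξ₀) :=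
      (hasDerivAt_const _ t₀).prodMk (hasDerivAt_id _)
    have h4 : HasDerivAt (fun x => linv (t₀, x))
        ((shearEquiv P D hD).symm (0, 1)) (G t₀ ξ₀) :=
      HasFDerivAt.comp_hasDerivAt (l := linv) (G t₀ ξ₀) hinvd.hasFDerivAt hcurve
    have h5 := (ContinuousLinearMap.snd ℝ ℝ ℝ).hasFDerivAt.comp_hasDerivAt (G t₀ ξ₀) h4
    refine HasDerivAt.congr_deriv h5 (Eq.symm ?_)
    rw [shearEquiv_symm_apply]
    simp
  · filter_upwards [hev] with p hp
    simp only [hΦ, Prod.ext_iff] at hp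
    obtain ⟨h1, h2⟩ := hp
    rwa [h1] at h2

/-- Global existence for the damped Burgers equation with strong damping `a ≥ 1`:
for bounded C¹ data `f` with `f' ≥ -1`, the characteristic maps
`g_t(ξ) = ξ + (f(ξ)/a)(1 - e^{-a(t+1)})` are C¹ diffeomorphisms of ℝ, and
`u(x,t) = e^{-a(t+1)} f(g_t⁻¹(x))` is a global C¹ solution of
`∂ₜu + u ∂ₓu = -a u` with `u(·,-1) = f`. -/
theorem damped_burgers_global_existence
    (a : ℝ) (ha : 1 ≤ a) (f : ℝ → ℝ)
    (hf : ContDiff ℝ 1 f) (hfb : ∃ M : ℝ, ∀ x : ℝ, |f x| ≤ M)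
    (hf' : ∀ ξ : ℝ, -1 ≤ deriv f ξ)
    (G : ℝ → ℝ → ℝ)
    (hG : ∀ t ξ : ℝ, G t ξ = ξ + f ξ / a * (1 - Real.exp (-a * (t + 1))))
    (u : ℝ → ℝ → ℝ)
    (hu : ∀ x t : ℝ, u x t = Real.exp (-a * (t + 1)) * f (Function.invFun (G t) x)) :
    (∀ t : ℝ, -1 ≤ t → Function.Bijective (G t) ∧ ContDiff ℝ 1 (G t) ∧
      ContDiff ℝ 1 (Function.invFun (G t))) ∧
    (∀ t ξ : ℝ, -1 ≤ t →
      HasDerivAt (G t) (1 + deriv f ξ / a * (1 - Real.exp (-a * (t + 1)))) ξ ∧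
      Real.exp (-a * (t + 1)) / a
        ≤ 1 + deriv f ξ / a * (1 - Real.exp (-a * (t + 1))) ∧
      0 < Real.exp (-a * (t + 1)) / a) ∧
    ContDiffOn ℝ 1 (fun p : ℝ × ℝ => u p.1 p.2) {p : ℝ × ℝ | -1 ≤ p.2} ∧
    (∀ x : ℝ, u x (-1) = f x) ∧
    (∀ x t : ℝ, -1 ≤ t →
      ∃ ut : ℝ, HasDerivWithinAt (fun t' => u x t') ut (Ici (-1 : ℝ)) t ∧
        ut + u x t * deriv (fun x' => u x' t) x = -a * u x t) := by
  have hapos : 0 < a := lt_of_lt_of_le one_pos ha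
  have hEpos : ∀ t : ℝ, 0 < Real.exp (-a * (t + 1)) := fun t => Real.exp_pos _
  have hEle : ∀ t : ℝ, -1 ≤ t → Real.exp (-a * (t + 1)) ≤ 1 := by
    intro t ht
    rw [Real.exp_le_one_iff]
    nlinarith
  have hDlb : ∀ t ξ : ℝ, -1 ≤ t →
      Real.exp (-a * (t + 1)) / a ≤ 1 + deriv f ξ / a * (1 - Real.exp (-a * (t + 1))) := by
    intro t ξ ht
    have h1 : 0 < Real.exp (-a * (t + 1)) := hEpos t
    have h2 : Real.exp (-a * (t + 1)) ≤ 1 := hEle t ht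
    have h3 : -1 ≤ deriv f ξ := hf' ξ
    have hkey : 1 + deriv f ξ / a * (1 - Real.exp (-a * (t + 1))) - Real.exp (-a * (t + 1)) / a
        = (a - 1) / a + (1 - Real.exp (-a * (t + 1))) * (1 + deriv f ξ) / a := by
      field_simp
      ring
    have h4 : 0 ≤ (a - 1) / a := div_nonneg (by linarith) hapos.le
    have h5 : 0 ≤ (1 - Real.exp (-a * (t + 1))) * (1 + deriv f ξ) / a := by
      apply div_nonneg _ hapos.le
      apply mul_nonneg <;> linarith
    linarith
  have hGderiv : ∀ t ξ : ℝ,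
      HasDerivAt (G t) (1 + deriv f ξ / a * (1 - Real.exp (-a * (t + 1)))) ξ := by
    intro t ξ
    have hGt : G t = fun ξ => ξ + f ξ / a * (1 - Real.exp (-a * (t + 1))) := funext (hG t)
    rw [hGt]
    exact (hasDerivAt_id ξ).add
      ((((hf.differentiable one_ne_zero ξ).hasDerivAt).div_const a).mul_const _)
  have hGcd : ∀ t : ℝ, ContDiff ℝ 1 (G t) := by
    intro t
    have hGt : G t = fun ξ => ξ + f ξ / a * (1 - Real.exp (-a * (t + 1))) := funext (hG t)
    rw [hGt]
    exact contDiff_id.add ((hf.div_const a).mul contDiff_const)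
  have hInj : ∀ t : ℝ, -1 ≤ t → Function.Injective (G t) := by
    intro t ht
    refine (strictMono_of_deriv_pos ?_).injective
    intro ξ
    rw [(hGderiv t ξ).deriv]
    exact lt_of_lt_of_le (div_pos (hEpos t) hapos) (hDlb t ξ ht)
  obtain ⟨M, hM⟩ := hfb
  have hMnn : 0 ≤ M := le_trans (abs_nonneg _) (hM 0)
  have hbound : ∀ t x : ℝ, -1 ≤ t → |f x / a * (1 - Real.exp (-a * (t + 1)))| ≤ M := by
    intro t x ht
    rw [abs_mul, abs_div, abs_of_pos hapos]
    have h1 : |1 - Real.exp (-a * (t + 1))| ≤ 1 :=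
      abs_le.2 ⟨by linarith [hEle t ht], by linarith [hEpos t]⟩
    calc |f x| / a * |1 - Real.exp (-a * (t + 1))| ≤ M / a * 1 := by
          apply mul_le_mul _ h1 (abs_nonneg _) (by positivity)
          gcongr
          exact hM x
      _ ≤ M := by rw [mul_one]; exact div_le_self hMnn ha
  have hSurj : ∀ t : ℝ, -1 ≤ t → Function.Surjective (G t) := by
    intro t ht
    refine Continuous.surjective ((hGcd t).continuous) ?_ ?_
    · apply Filter.tendsto_atTop_mono (fun x => ?_)
        (Filter.tendsto_atTop_add_const_right _ (-M) Filter.tendsto_id)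
      rw [hG]
      have := (abs_le.1 (hbound t x ht)).1
      simp only [id_eq]
      linarith
    · apply Filter.tendsto_atBot_mono (fun x => ?_)
        (Filter.tendsto_atBot_add_const_right _ M Filter.tendsto_id)
      rw [hG]
      have := (abs_le.1 (hbound t x ht)).2
      simp only [id_eq]
      linarith
  have hRight : ∀ t x : ℝ, -1 ≤ t → G t (Function.invFun (G t) x) = x :=
    fun t x ht => Function.rightInverse_invFun (hSurj t ht) x
  -- identification of invFun with local inverse, eventually in x
  have hInvEq : ∀ t x : ℝ, -1 ≤ t → ∀ H : ℝ × ℝ → ℝ,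
      (∀ᶠ p : ℝ × ℝ in nhds (t, x), G p.1 (H p) = p.2) →
      Function.invFun (G t) =ᶠ[nhds x] fun x' => H (t, x') := by
    intro t x ht H hHev
    have hmap : Filter.Tendsto (fun x' : ℝ => (t, x')) (nhds x) (nhds (t, x)) :=
      (Continuous.tendsto (continuous_const.prodMk continuous_id) x)
    filter_upwards [hmap.eventually hHev] with x' hx'
    exact hInj t ht (by rw [hRight t x' ht]; exact hx'.symm)
  refine ⟨?_, ?_, ?_, ?_, ?_⟩
  · -- part 1
    intro t ht
    refine ⟨⟨hInj t ht, hSurj t ht⟩, hGcd t, ?_⟩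
    rw [contDiff_iff_contDiffAt]
    intro x
    obtain ⟨H, hHc, hHval, hHt, hHx, hHev⟩ :=
      key a hapos f hf G hG t (Function.invFun (G t) x)
        (lt_of_lt_of_le (div_pos (hEpos t) hapos) (hDlb t _ ht)).ne'
    rw [hRight t x ht] at hHc hHev
    have hcomp : ContDiffAt ℝ 1 (fun x' => H (t, x')) x :=
      hHc.comp x (contDiffAt_const.prodMk contDiffAt_id)
    exact hcomp.congr_of_eventuallyEq (hInvEq t x ht H hHev)
  · -- part 2
    intro t ξ ht
    exact ⟨hGderiv t ξ, hDlb t ξ ht, div_pos (hEpos t) hapos⟩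
  · -- part 3 : joint C¹
    rintro ⟨x₀, t₀⟩ hp
    simp only [mem_setOf_eq] at hp
    obtain ⟨H, hHc, hHval, hHt, hHx, hHev⟩ :=
      key a hapos f hf G hG t₀ (Function.invFun (G t₀) x₀)
        (lt_of_lt_of_le (div_pos (hEpos t₀) hapos) (hDlb t₀ _ hp)).ne'
    rw [hRight t₀ x₀ hp] at hHc hHval hHt hHx hHev
    have hswap : ContDiffAt ℝ 1 (fun p : ℝ × ℝ => (p.2, p.1)) (x₀, t₀) :=
      contDiffAt_snd.prodMk contDiffAt_fst
    have hFc : ContDiffAt ℝ 1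
        (fun p : ℝ × ℝ => Real.exp (-a * (p.2 + 1)) * f (H (p.2, p.1))) (x₀, t₀) := by
      have h1 : ContDiffAt ℝ 1 (H ∘ fun p : ℝ × ℝ => (p.2, p.1)) (x₀, t₀) :=
        hHc.comp ((x₀ : ℝ), (t₀ : ℝ)) hswap
      have h2 : ContDiffAt ℝ 1 (f ∘ (H ∘ fun p : ℝ × ℝ => (p.2, p.1))) (x₀, t₀) :=
        (hf.contDiffAt).comp _ h1
      exact ContDiffAt.mul ((Real.contDiff_exp.comp
        (contDiff_const.mul (contDiff_snd.add contDiff_const))).contDiffAt) h2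
    refine hFc.contDiffWithinAt.congr_of_eventuallyEq ?_ ?_
    · have hmap : Filter.Tendsto (fun p : ℝ × ℝ => (p.2, p.1))
          (nhds (x₀, t₀)) (nhds (t₀, x₀)) :=
        Continuous.tendsto (continuous_snd.prodMk continuous_fst) _
      have hev2 : ∀ᶠ p : ℝ × ℝ in nhds (x₀, t₀), G p.2 (H (p.2, p.1)) = p.1 :=
        hmap.eventually hHev
      have hev3 : ∀ᶠ p in nhdsWithin (x₀, t₀) {p : ℝ × ℝ | -1 ≤ p.2},
          G p.2 (H (p.2, p.1)) = p.1 := hev2.filter_mono nhdsWithin_le_nhds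
      filter_upwards [hev3, self_mem_nhdsWithin] with p h1 h2
      rw [hu, show Function.invFun (G p.2) p.1 = H (p.2, p.1) from
        hInj p.2 h2 (by rw [hRight p.2 p.1 h2]; exact h1.symm)]
    · rw [hu, hHval]
  · -- part 4 : initial condition
    intro x
    have hid : G (-1) = id := by
      funext ξ
      rw [hG]
      norm_num
    have hinv : Function.invFun (G (-1)) x = x := by
      rw [hid]
      exact Function.leftInverse_invFun Function.injective_id x
    rw [hu, hinv]
    norm_num
  · -- part 5 : the PDE
    intro x t ht
    have hxs : G t (Function.invFun (G t) x) = x := hRight t x ht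
    obtain ⟨H, hHc, hHval, hHt, hHx, hHev⟩ :=
      key a hapos f hf G hG t (Function.invFun (G t) x)
        (lt_of_lt_of_le (div_pos (hEpos t) hapos) (hDlb t _ ht)).ne'
    rw [hxs] at hHc hHval hHt hHx hHev
    have hinvx : HasDerivAt (Function.invFun (G t))
        (1 + deriv f (Function.invFun (G t) x) / a *
          (1 - Real.exp (-a * (t + 1))))⁻¹ x :=
      hHx.congr_of_eventuallyEq (hInvEq t x ht H hHev)
    have hfx : HasDerivAt (fun x' => f (Function.invFun (G t) x'))
        (deriv f (Function.invFun (G t) x) *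
          (1 + deriv f (Function.invFun (G t) x) / a *
            (1 - Real.exp (-a * (t + 1))))⁻¹) x :=
      ((hf.differentiable one_ne_zero _).hasDerivAt).comp x hinvx
    have hux : HasDerivAt (fun x' => u x' t)
        (Real.exp (-a * (t + 1)) * (deriv f (Function.invFun (G t) x) *
          (1 + deriv f (Function.invFun (G t) x) / a *
            (1 - Real.exp (-a * (t + 1))))⁻¹)) x := by
      have heq : (fun x' => u x' t)
          = fun x' => Real.exp (-a * (t + 1)) * f (Function.invFun (G t) x') := by
        funext x'; rw [hu]
      rw [heq]
      exact hfx.const_mul _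
    have hexp : HasDerivAt (fun t' : ℝ => Real.exp (-a * (t' + 1)))
        (-a * Real.exp (-a * (t + 1))) t := by
      have h := (((hasDerivAt_id t).add_const 1).const_mul (-a)).exp
      convert h using 1
      simp only [id_eq]
      simp [id]
      ring
    have hHt' : HasDerivAt (fun t' => f (H (t', x)))
        (deriv f (Function.invFun (G t) x) *
          (-(f (Function.invFun (G t) x) * Real.exp (-a * (t + 1))) /
            (1 + deriv f (Function.invFun (G t) x) / a *
              (1 - Real.exp (-a * (t + 1)))))) t := by
      have hg : HasDerivAt f (deriv f (Function.invFun (G t) x)) (H (t, x)) := by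
        rw [hHval]; exact (hf.differentiable one_ne_zero _).hasDerivAt
      exact hg.comp t hHt
    have hprod : HasDerivAt (fun t' => Real.exp (-a * (t' + 1)) * f (H (t', x)))
        (-a * Real.exp (-a * (t + 1)) * f (Function.invFun (G t) x)
          + Real.exp (-a * (t + 1)) * (deriv f (Function.invFun (G t) x) *
            (-(f (Function.invFun (G t) x) * Real.exp (-a * (t + 1))) /
              (1 + deriv f (Function.invFun (G t) x) / a *
                (1 - Real.exp (-a * (t + 1))))))) t := by
      have h := hexp.mul hHt'
      rw [hHval] at h; exact h
    refine ⟨-a * Real.exp (-a * (t + 1)) * f (Function.invFun (G t) x)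
      + Real.exp (-a * (t + 1)) * (deriv f (Function.invFun (G t) x) *
        (-(f (Function.invFun (G t) x) * Real.exp (-a * (t + 1))) /
          (1 + deriv f (Function.invFun (G t) x) / a *
            (1 - Real.exp (-a * (t + 1)))))), ?_, ?_⟩
    · refine hprod.hasDerivWithinAt.congr_of_eventuallyEq ?_ ?_
      · have hmap : Filter.Tendsto (fun t' : ℝ => (t', x)) (nhds t) (nhds (t, x)) :=
          Continuous.tendsto (continuous_id.prodMk continuous_const) t
        have hev2 : ∀ᶠ t' in nhds t, G t' (H (t', x)) = x := hmap.eventually hHev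
        have hev3 : ∀ᶠ t' in nhdsWithin t (Ici (-1 : ℝ)), G t' (H (t', x)) = x :=
          hev2.filter_mono nhdsWithin_le_nhds
        filter_upwards [hev3, self_mem_nhdsWithin] with t' h1 h2
        rw [hu, show Function.invFun (G t') x = H (t', x) from
          hInj t' h2 (by rw [hRight t' x h2]; exact h1.symm)]
      · rw [hu, hHval]
    · rw [hux.deriv, hu x t]
      have hDne : (1 + deriv f (Function.invFun (G t) x) / a *
          (1 - Real.exp (-a * (t + 1)))) ≠ 0 :=
        (lt_of_lt_of_le (div_pos (hEpos t) hapos) (hDlb t _ ht)).ne'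
      field_simp
      ring
end

section
/- Let u be a C² solution of the Burgers equation ∂ₜu + u ∂ₓu = 0 on an open set Ω ⊆ ℝ² (variables (x, t)). Then at every point of Ω the determinant of the Hessian of u satisfies ∂ₓ²u · ∂ₜ²u - (∂ₓ∂ₜu)² = -(∂ₓu)⁴. Consequently the Gauss curvature of the graph surface {(x, t, u(x, t))} equals K = -(∂ₓu)⁴ / (1 + (∂ₓu)² + (∂ₜu)²)². -/
open Set

/-- For a C² solution of the Burgers equation on an open set `Ω ⊆ ℝ²`, the Hessian
determinant satisfies `∂ₓ²u ∂ₜ²u - (∂ₓ∂ₜu)² = -(∂ₓu)⁴`; consequently the Gauss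
curvature of the graph surface equals `-(∂ₓu)⁴ / (1 + (∂ₓu)² + (∂ₜu)²)²`. -/
theorem burgers_graph_gauss_curvature
    (u : ℝ → ℝ → ℝ) (Ω : Set (ℝ × ℝ)) (hΩ : IsOpen Ω)
    (hreg : ContDiffOn ℝ 2 (fun p : ℝ × ℝ => u p.1 p.2) Ω)
    (heq : ∀ p : ℝ × ℝ, p ∈ Ω →
      deriv (fun t => u p.1 t) p.2 + u p.1 p.2 * deriv (fun x => u x p.2) p.1 = 0) :
    ∀ p : ℝ × ℝ, p ∈ Ω →
      deriv (fun x => deriv (fun x' => u x' p.2) x) p.1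
          * deriv (fun t => deriv (fun t' => u p.1 t') t) p.2
        - deriv (fun x => deriv (fun t => u x t) p.2) p.1 ^ 2
      = -deriv (fun x => u x p.2) p.1 ^ 4 ∧
      (deriv (fun x => deriv (fun x' => u x' p.2) x) p.1
          * deriv (fun t => deriv (fun t' => u p.1 t') t) p.2
        - deriv (fun x => deriv (fun t => u x t) p.2) p.1 ^ 2)
        / (1 + deriv (fun x => u x p.2) p.1 ^ 2
            + deriv (fun t => u p.1 t) p.2 ^ 2) ^ 2
      = -deriv (fun x => u x p.2) p.1 ^ 4
        / (1 + deriv (fun x => u x p.2) p.1 ^ 2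
            + deriv (fun t => u p.1 t) p.2 ^ 2) ^ 2 := by
  intro p hp
  set F : ℝ × ℝ → ℝ := fun q => u q.1 q.2 with hFdef
  have hFd : ∀ q ∈ Ω, DifferentiableAt ℝ F q := fun q hq =>
    (hreg.contDiffAt (hΩ.mem_nhds hq)).differentiableAt two_ne_zero
  have hfC : ContDiffOn ℝ 1 (fderiv ℝ F) Ω :=
    hreg.fderiv_of_isOpen hΩ (by norm_num)
  have hfd : DifferentiableAt ℝ (fderiv ℝ F) p :=
    (hfC.contDiffAt (hΩ.mem_nhds hp)).differentiableAt one_ne_zero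
  set f1 := fderiv ℝ F p with hf1
  set f2 := fderiv ℝ (fderiv ℝ F) p with hf2
  have hsymm : ∀ v w, f2 v w = f2 w v :=
    (hreg.contDiffAt (hΩ.mem_nhds hp)).isSymmSndFDerivAt (by simp)
  -- partial derivatives as fderiv
  have hlineX : ∀ q : ℝ × ℝ, HasDerivAt (fun x => (x, q.2)) ((1:ℝ), (0:ℝ)) q.1 :=
    fun q => (hasDerivAt_id q.1).prodMk (hasDerivAt_const q.1 q.2)
  have hlineT : ∀ q : ℝ × ℝ, HasDerivAt (fun t => (q.1, t)) ((0:ℝ), (1:ℝ)) q.2 :=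
    fun q => (hasDerivAt_const q.2 q.1).prodMk (hasDerivAt_id q.2)
  have h1 : ∀ q ∈ Ω, HasDerivAt (fun x => u x q.2) (fderiv ℝ F q ((1:ℝ),(0:ℝ))) q.1 := by
    intro q hq
    have := ((hFd q hq).hasFDerivAt.comp_hasDerivAt q.1
      (by simpa using hlineX q))
    simpa [Function.comp_def] using this
  have h2 : ∀ q ∈ Ω, HasDerivAt (fun t => u q.1 t) (fderiv ℝ F q ((0:ℝ),(1:ℝ))) q.2 := by
    intro q hq
    have := ((hFd q hq).hasFDerivAt.comp_hasDerivAt q.2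
      (by simpa using hlineT q))
    simpa [Function.comp_def] using this
  -- derivative of the evaluated-fderiv maps
  have happ : ∀ v : ℝ × ℝ, HasFDerivAt (fun q => fderiv ℝ F q v)
      ((ContinuousLinearMap.apply ℝ ℝ v).comp f2) p :=
    fun v => ((ContinuousLinearMap.apply ℝ ℝ v).hasFDerivAt).comp p hfd.hasFDerivAt
  have hderX : ∀ v : ℝ × ℝ, HasDerivAt (fun x => fderiv ℝ F (x, p.2) v)
      (f2 ((1:ℝ),(0:ℝ)) v) p.1 := by
    intro v
    have := (happ v).comp_hasDerivAt p.1 (by simpa using hlineX p)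
    simpa [Function.comp_def] using this
  have hderT : ∀ v : ℝ × ℝ, HasDerivAt (fun t => fderiv ℝ F (p.1, t) v)
      (f2 ((0:ℝ),(1:ℝ)) v) p.2 := by
    intro v
    have := (happ v).comp_hasDerivAt p.2 (by simpa using hlineT p)
    simpa [Function.comp_def] using this
  -- eventual membership along the axes
  have hmemx : ∀ᶠ x in nhds p.1, (x, p.2) ∈ Ω := by
    have hc : ContinuousAt (fun x : ℝ => (x, p.2)) p.1 :=
      (continuous_id.prodMk continuous_const).continuousAt
    have := hc.preimage_mem_nhds (by simpa using hΩ.mem_nhds hp)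
    exact this
  have hmemt : ∀ᶠ t in nhds p.2, (p.1, t) ∈ Ω := by
    have hc : ContinuousAt (fun t : ℝ => (p.1, t)) p.2 :=
      (continuous_const.prodMk continuous_id).continuousAt
    have := hc.preimage_mem_nhds (by simpa using hΩ.mem_nhds hp)
    exact this
  -- identify second derivatives
  have hQ1 : deriv (fun x => deriv (fun x' => u x' p.2) x) p.1
      = f2 ((1:ℝ),(0:ℝ)) ((1:ℝ),(0:ℝ)) := by
    have hev : (fun x => deriv (fun x' => u x' p.2) x)
        =ᶠ[nhds p.1] fun x => fderiv ℝ F (x, p.2) ((1:ℝ),(0:ℝ)) :=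
      hmemx.mono fun x hx => (h1 (x, p.2) hx).deriv
    rw [hev.deriv_eq, (hderX ((1:ℝ),(0:ℝ))).deriv]
  have hQ3 : deriv (fun x => deriv (fun t => u x t) p.2) p.1
      = f2 ((1:ℝ),(0:ℝ)) ((0:ℝ),(1:ℝ)) := by
    have hev : (fun x => deriv (fun t => u x t) p.2)
        =ᶠ[nhds p.1] fun x => fderiv ℝ F (x, p.2) ((0:ℝ),(1:ℝ)) :=
      hmemx.mono fun x hx => (h2 (x, p.2) hx).deriv
    rw [hev.deriv_eq, (hderX ((0:ℝ),(1:ℝ))).deriv]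
  have hQ2 : deriv (fun t => deriv (fun t' => u p.1 t') t) p.2
      = f2 ((0:ℝ),(1:ℝ)) ((0:ℝ),(1:ℝ)) := by
    have hev : (fun t => deriv (fun t' => u p.1 t') t)
        =ᶠ[nhds p.2] fun t => fderiv ℝ F (p.1, t) ((0:ℝ),(1:ℝ)) :=
      hmemt.mono fun t ht => (h2 (p.1, t) ht).deriv
    rw [hev.deriv_eq, (hderT ((0:ℝ),(1:ℝ))).deriv]
  -- differentiate the PDE
  set G : ℝ × ℝ → ℝ := fun q => fderiv ℝ F q ((0:ℝ),(1:ℝ)) + F q * fderiv ℝ F q ((1:ℝ),(0:ℝ))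
    with hGdef
  have hGzero : ∀ᶠ q in nhds p, G q = 0 := by
    filter_upwards [hΩ.mem_nhds hp] with q hq
    have := heq q hq
    rw [(h1 q hq).deriv, (h2 q hq).deriv] at this
    simpa [hGdef] using this
  have hGder : HasFDerivAt G
      (((ContinuousLinearMap.apply ℝ ℝ ((0:ℝ),(1:ℝ))).comp f2)
        + (F p • ((ContinuousLinearMap.apply ℝ ℝ ((1:ℝ),(0:ℝ))).comp f2)
            + (fderiv ℝ F p ((1:ℝ),(0:ℝ))) • f1)) p :=
    (happ ((0:ℝ),(1:ℝ))).add (((hFd p hp).hasFDerivAt).mul (happ ((1:ℝ),(0:ℝ))))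
  have hG0 : HasFDerivAt G (0 : (ℝ × ℝ) →L[ℝ] ℝ) p :=
    (hasFDerivAt_const (0:ℝ) p).congr_of_eventuallyEq (by
      filter_upwards [hGzero] with q hq using hq)
  have hLzero := hGder.unique hG0
  have eq1 : f2 ((1:ℝ),(0:ℝ)) ((0:ℝ),(1:ℝ)) + F p * f2 ((1:ℝ),(0:ℝ)) ((1:ℝ),(0:ℝ))
      + f1 ((1:ℝ),(0:ℝ)) * f1 ((1:ℝ),(0:ℝ)) = 0 := by
    have := congrFun (congrArg DFunLike.coe hLzero) ((1:ℝ),(0:ℝ))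
    simpa [ContinuousLinearMap.add_apply, ContinuousLinearMap.comp_apply,
      ContinuousLinearMap.smul_apply, smul_eq_mul, mul_comm, ← hf1, add_assoc] using this
  have eq2 : f2 ((0:ℝ),(1:ℝ)) ((0:ℝ),(1:ℝ)) + F p * f2 ((0:ℝ),(1:ℝ)) ((1:ℝ),(0:ℝ))
      + f1 ((1:ℝ),(0:ℝ)) * f1 ((0:ℝ),(1:ℝ)) = 0 := by
    have := congrFun (congrArg DFunLike.coe hLzero) ((0:ℝ),(1:ℝ))
    simpa [ContinuousLinearMap.add_apply, ContinuousLinearMap.comp_apply,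
      ContinuousLinearMap.smul_apply, smul_eq_mul, mul_comm, ← hf1, add_assoc] using this
  have eq3 : f1 ((0:ℝ),(1:ℝ)) + F p * f1 ((1:ℝ),(0:ℝ)) = 0 := by
    have := heq p hp
    rwa [(h1 p hp).deriv, (h2 p hp).deriv, ← hf1] at this
  have hux : deriv (fun x => u x p.2) p.1 = f1 ((1:ℝ),(0:ℝ)) := by
    rw [(h1 p hp).deriv, hf1]
  have hut : deriv (fun t => u p.1 t) p.2 = f1 ((0:ℝ),(1:ℝ)) := by
    rw [(h2 p hp).deriv, hf1]
  have key : f2 ((1:ℝ),(0:ℝ)) ((1:ℝ),(0:ℝ)) * f2 ((0:ℝ),(1:ℝ)) ((0:ℝ),(1:ℝ))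
      - f2 ((1:ℝ),(0:ℝ)) ((0:ℝ),(1:ℝ)) ^ 2 = -f1 ((1:ℝ),(0:ℝ)) ^ 4 := by
    have hs := hsymm ((0:ℝ),(1:ℝ)) ((1:ℝ),(0:ℝ))
    rw [hs] at eq2
    linear_combination f2 ((1:ℝ),(0:ℝ)) ((1:ℝ),(0:ℝ)) * eq2
      - f2 ((1:ℝ),(0:ℝ)) ((0:ℝ),(1:ℝ)) * eq1
      - f2 ((1:ℝ),(0:ℝ)) ((1:ℝ),(0:ℝ)) * f1 ((1:ℝ),(0:ℝ)) * eq3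
      + f1 ((1:ℝ),(0:ℝ)) ^ 2 * eq1
  constructor
  · rw [hQ1, hQ2, hQ3, hux]; exact key
  · rw [hQ1, hQ2, hQ3, hux, key]
end
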